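/- arXiv:1903.12430 — 6 statements merged into one kernel-verified Lean document; each statement's English description precedes it below -/
import Mathlib

section
/- Time-decay sup-norm estimate via the dilation operator J: there is an absolute constant C > 0 such that for every t > 0 and every continuously differentiable φ : (0,∞) → ℂ with φ ∈ L²(ℝ⁺) and J_t φ ∈ L²(ℝ⁺) (where (J_t φ)(x) = x φ(x) + i t φ'(x)), one has sup_{x>0} |φ(x)| ≤ C t^{−1/2} ‖J_t φ‖_{L²(ℝ⁺)}^{1/2} ‖φ‖_{L²(ℝ⁺)}^{1/2}. -/
open MeasureTheory Set

/-- The `L²` norm of a function on the half line `(0, ∞)`. -/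
noncomputable def L2norm (φ : ℝ → ℂ) : ℝ :=
  Real.sqrt (∫ x in Set.Ioi (0:ℝ), ‖φ x‖ ^ 2)

/-- The dilation operator `(J_t φ)(x) = x φ(x) + i t φ'(x)`. -/
noncomputable def Jop (t : ℝ) (φ : ℝ → ℂ) : ℝ → ℂ :=
  fun x => (x : ℂ) * φ x + Complex.I * (t : ℂ) * deriv φ x

private lemma hasDerivAt_normSq' (φ : ℝ → ℂ) (u : ℝ) (d : ℂ) (hd : HasDerivAt φ d u) :
    HasDerivAt (fun v => ‖φ v‖ ^ 2) (2 * (d * (starRingEnd ℂ) (φ u)).re) u := by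
  have h1 : HasDerivAt (fun v => (φ v).re) d.re u :=
    (Complex.reCLM.hasFDerivAt.comp_hasDerivAt u hd)
  have h2 : HasDerivAt (fun v => (φ v).im) d.im u :=
    (Complex.imCLM.hasFDerivAt.comp_hasDerivAt u hd)
  have h3 : HasDerivAt (fun v => (φ v).re ^ 2 + (φ v).im ^ 2)
      (2 * (φ u).re * d.re + 2 * (φ u).im * d.im) u := by
    have : HasDerivAt (fun v => (φ v).re ^ 2 + (φ v).im ^ 2) _ u := ((h1.fun_pow 2).add (h2.fun_pow 2))
    convert this using 1
    ring
  have heq : (fun v => ‖φ v‖ ^ 2) = fun v => (φ v).re ^ 2 + (φ v).im ^ 2 := by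
    funext v
    rw [Complex.sq_norm, Complex.normSq_apply]
    ring
  rw [heq]
  convert h3 using 1
  simp [Complex.mul_re, Complex.conj_re, Complex.conj_im]
  ring

private lemma amgm_aux (p q l : ℝ) (hl : 0 < l) :
    2 * (p * q) ≤ l * q ^ 2 + p ^ 2 / l := by
  have key : l * q ^ 2 + p ^ 2 / l - 2 * (p * q) = (l * q - p) ^ 2 / l := by
    field_simp
    ring
  nlinarith [sq_nonneg (l * q - p), div_nonneg (sq_nonneg (l * q - p)) hl.le]

/-- Time-decay sup-norm estimate via the dilation operator `J`. -/
theorem sup_bound_via_J :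
    ∃ C > (0:ℝ), ∀ t : ℝ, 0 < t → ∀ φ : ℝ → ℂ,
      ContDiffOn ℝ 1 φ (Set.Ioi 0) →
      MeasureTheory.IntegrableOn (fun x => ‖φ x‖ ^ 2) (Set.Ioi 0) →
      MeasureTheory.IntegrableOn (fun x => ‖Jop t φ x‖ ^ 2) (Set.Ioi 0) →
      ∀ x : ℝ, 0 < x →
        ‖φ x‖ ≤ C * t ^ (-(1/2) : ℝ) * L2norm (Jop t φ) ^ ((1:ℝ)/2) *
          L2norm φ ^ ((1:ℝ)/2) := by
  refine ⟨Real.sqrt 2, Real.sqrt_pos.2 two_pos, ?_⟩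
  intro t ht φ hφ hφL2 hJL2 x hx
  set A := ∫ x in Ioi (0:ℝ), ‖φ x‖ ^ 2 with hAdef
  set B := ∫ x in Ioi (0:ℝ), ‖Jop t φ x‖ ^ 2 with hBdef
  have hA0 : 0 ≤ A := setIntegral_nonneg measurableSet_Ioi (fun u _ => by positivity)
  have hB0 : 0 ≤ B := setIntegral_nonneg measurableSet_Ioi (fun u _ => by positivity)
  -- derivative facts
  have hder : ∀ u ∈ Ioi (0:ℝ), HasDerivAt φ (deriv φ u) u := fun u hu =>
    ((hφ.contDiffAt (isOpen_Ioi.mem_nhds hu)).differentiableAt one_ne_zero).hasDerivAt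
  set F' : ℝ → ℝ := fun u => 2 * (deriv φ u * (starRingEnd ℂ) (φ u)).re with hF'def
  have hf : ∀ u ∈ Ioi (0:ℝ), HasDerivAt (fun v => ‖φ v‖ ^ 2) (F' u) u := fun u hu =>
    hasDerivAt_normSq' φ u _ (hder u hu)
  -- pointwise bound on the derivative
  have hbound : ∀ u ∈ Ioi (0:ℝ), |F' u| ≤ (2 / t) * (‖Jop t φ u‖ * ‖φ u‖) := by
    intro u hu
    have key : t * F' u = 2 * (Jop t φ u * (starRingEnd ℂ) (φ u)).im := by
      simp only [hF'def, Jop, add_mul, Complex.add_im, Complex.mul_im, Complex.mul_re,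
        Complex.I_re, Complex.I_im, Complex.ofReal_re, Complex.ofReal_im,
        Complex.conj_re, Complex.conj_im, RingHom.coe_coe]
      simp [Complex.conj_re, Complex.conj_im, Complex.mul_re, Complex.mul_im]
      ring
    have h1 : |t * F' u| ≤ 2 * (‖Jop t φ u‖ * ‖φ u‖) := by
      rw [key, abs_mul, abs_two]
      have him : |(Jop t φ u * (starRingEnd ℂ) (φ u)).im| ≤ ‖Jop t φ u * (starRingEnd ℂ) (φ u)‖ :=
        Complex.abs_im_le_norm _
      have hnorm : ‖Jop t φ u * (starRingEnd ℂ) (φ u)‖ = ‖Jop t φ u‖ * ‖φ u‖ := by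
        rw [norm_mul, RCLike.norm_conj]
      nlinarith [norm_nonneg (Jop t φ u * (starRingEnd ℂ) (φ u))]
    rw [abs_mul, abs_of_pos ht] at h1
    rw [div_mul_eq_mul_div, le_div_iff₀ ht]
    calc |F' u| * t = t * |F' u| := mul_comm _ _
    _ ≤ 2 * (‖Jop t φ u‖ * ‖φ u‖) := h1
  -- continuity facts
  have hcontφ : ContinuousOn φ (Ioi (0:ℝ)) := hφ.continuousOn
  have hcontd : ContinuousOn (deriv φ) (Ioi (0:ℝ)) :=
    hφ.continuousOn_deriv_of_isOpen isOpen_Ioi le_rfl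
  have hcontF' : ContinuousOn F' (Ioi (0:ℝ)) := by
    apply ContinuousOn.mul continuousOn_const
    exact Complex.continuous_re.comp_continuousOn
      (hcontd.mul ((Complex.continuous_conj).comp_continuousOn hcontφ))
  have hcontJ : ContinuousOn (Jop t φ) (Ioi (0:ℝ)) := by
    apply ContinuousOn.add
    · exact (Complex.continuous_ofReal.continuousOn).mul hcontφ
    · exact continuousOn_const.mul hcontd
  -- existence of points where ‖φ y‖² is small
  have hsmall : ∀ ε > (0:ℝ), ∃ y, x < y ∧ ‖φ y‖ ^ 2 < ε := by
    intro ε hε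
    by_contra hcon
    push_neg at hcon
    have hIntx : IntegrableOn (fun u => ‖φ u‖ ^ 2) (Ioi x) volume :=
      hφL2.mono_set (Ioi_subset_Ioi hx.le)
    have hconst : IntegrableOn (fun _ : ℝ => ε) (Ioi x) volume := by
      refine Integrable.mono hIntx aestronglyMeasurable_const ?_
      refine (ae_restrict_iff' measurableSet_Ioi).2 (ae_of_all _ fun u hu => ?_)
      rw [Real.norm_of_nonneg hε.le, Real.norm_of_nonneg (by positivity)]
      exact hcon u hu
    rw [integrableOn_const_iff (C := ε)] at hconst
    rcases hconst with h | h
    · exact hε.ne' (enorm_eq_zero.1 h)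
    · rw [Real.volume_Ioi] at h
      exact (lt_irrefl _) h
  -- the key estimate for every λ > 0
  have key : ∀ l : ℝ, 0 < l → ‖φ x‖ ^ 2 ≤ (1 / t) * (l * A + B / l) := by
    intro l hl
    -- the comparison function
    set c : ℝ → ℝ := fun u => (1 / t) * (l * ‖φ u‖ ^ 2 + ‖Jop t φ u‖ ^ 2 / l) with hcdef
    have hcInt : IntegrableOn c (Ioi (0:ℝ)) volume := by
      exact ((hφL2.const_mul l).add (hJL2.div_const l)).const_mul (1 / t)
    have hcint_val : ∫ u in Ioi (0:ℝ), c u = (1 / t) * (l * A + B / l) := by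
      simp only [hcdef]
      rw [integral_const_mul, integral_add (hφL2.const_mul l) (hJL2.div_const l),
        integral_const_mul, integral_div]
    refine le_of_forall_pos_le_add ?_
    intro ε hε
    obtain ⟨y, hy, hyε⟩ := hsmall ε hε
    have hsub : Set.uIcc x y ⊆ Ioi (0:ℝ) := by
      rw [Set.uIcc_of_le hy.le]
      intro u hu
      exact lt_of_lt_of_le hx hu.1
    have hFTC : ∫ u in x..y, F' u = ‖φ y‖ ^ 2 - ‖φ x‖ ^ 2 := by
      apply intervalIntegral.integral_eq_sub_of_hasDerivAt
      · intro u hu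
        exact hf u (hsub hu)
      · exact (hcontF'.mono hsub).intervalIntegrable
    have hptwise : ∀ u ∈ Set.Icc x y, -F' u ≤ c u := by
      intro u hu
      have hu' : u ∈ Ioi (0:ℝ) := hsub (by rw [Set.uIcc_of_le hy.le]; exact hu)
      have h1 : -F' u ≤ |F' u| := neg_le_abs _
      have h2 := hbound u hu'
      have h3 : (2 / t) * (‖Jop t φ u‖ * ‖φ u‖) ≤ c u := by
        rw [hcdef]
        have := amgm_aux (‖Jop t φ u‖) (‖φ u‖) l hl
        have ht' : 0 < 1 / t := by positivity
        calc (2 / t) * (‖Jop t φ u‖ * ‖φ u‖)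
            = (1 / t) * (2 * (‖Jop t φ u‖ * ‖φ u‖)) := by ring
          _ ≤ (1 / t) * (l * ‖φ u‖ ^ 2 + ‖Jop t φ u‖ ^ 2 / l) := by
              apply mul_le_mul_of_nonneg_left this ht'.le
      linarith
    have hIntF' : IntervalIntegrable F' volume x y := (hcontF'.mono hsub).intervalIntegrable
    have hIntc : IntervalIntegrable c volume x y := by
      apply ContinuousOn.intervalIntegrable
      apply ContinuousOn.mul continuousOn_const
      apply ContinuousOn.add
      · exact continuousOn_const.mul
          ((continuous_norm.comp_continuousOn (hcontφ.mono hsub)).pow 2)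
      · exact ((continuous_norm.comp_continuousOn (hcontJ.mono hsub)).pow 2).div_const l
    have hmono : ∫ u in x..y, -F' u ≤ ∫ u in x..y, c u := by
      apply intervalIntegral.integral_mono_on hy.le hIntF'.neg hIntc
      exact hptwise
    have hcle : ∫ u in x..y, c u ≤ (1 / t) * (l * A + B / l) := by
      rw [intervalIntegral.integral_of_le hy.le, ← hcint_val]
      apply setIntegral_mono_set hcInt
      · refine ae_of_all _ fun u => ?_
        rw [hcdef]
        positivity
      · exact HasSubset.Subset.eventuallyLE (fun u hu => lt_of_lt_of_le hx hu.1.le)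
    rw [intervalIntegral.integral_neg, hFTC] at hmono
    linarith
  -- conclude: ‖φ x‖² ≤ (2/t) √A √B
  have final2 : ‖φ x‖ ^ 2 ≤ (2 / t) * (Real.sqrt A * Real.sqrt B) := by
    rcases eq_or_lt_of_le hA0 with hA' | hA'
    · -- A = 0
      have h0 : ‖φ x‖ ^ 2 ≤ 0 := by
        refine le_of_forall_pos_le_add ?_
        intro ε hε
        have hl : (0:ℝ) < (B + 1) / (t * ε) := by positivity
        have := key ((B + 1) / (t * ε)) hl
        have heq : (1 / t) * (((B + 1) / (t * ε)) * A + B / ((B + 1) / (t * ε)))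
            = B * ε / (B + 1) := by
          rw [← hA']
          field_simp
          ring
        rw [heq] at this
        have hle : B * ε / (B + 1) ≤ ε := by
          rw [div_le_iff₀ (by positivity : (0:ℝ) < B + 1)]
          nlinarith
        linarith
      have : 0 ≤ (2 / t) * (Real.sqrt A * Real.sqrt B) := by positivity
      linarith
    rcases eq_or_lt_of_le hB0 with hB' | hB'
    · -- B = 0
      have h0 : ‖φ x‖ ^ 2 ≤ 0 := by
        refine le_of_forall_pos_le_add ?_
        intro ε hε
        have hl : (0:ℝ) < t * ε / (A + 1) := by positivity
        have hk := key (t * ε / (A + 1)) hl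
        have heq : (1 / t) * ((t * ε / (A + 1)) * A + B / (t * ε / (A + 1)))
            = A * ε / (A + 1) := by
          rw [← hB']
          field_simp
          ring
        rw [heq] at hk
        have : A * ε / (A + 1) ≤ ε := by
          rw [div_le_iff₀ (by positivity : (0:ℝ) < A + 1)]
          nlinarith
        linarith
      have : 0 ≤ (2 / t) * (Real.sqrt A * Real.sqrt B) := by positivity
      linarith
    · -- A > 0, B > 0
      have sA : 0 < Real.sqrt A := Real.sqrt_pos.2 hA'
      have sB : 0 < Real.sqrt B := Real.sqrt_pos.2 hB'
      have hAA : Real.sqrt A * Real.sqrt A = A := Real.mul_self_sqrt hA0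
      have hBB : Real.sqrt B * Real.sqrt B = B := Real.mul_self_sqrt hB0
      have hk := key (Real.sqrt B / Real.sqrt A) (by positivity)
      have heq : (1 / t) * ((Real.sqrt B / Real.sqrt A) * A + B / (Real.sqrt B / Real.sqrt A))
          = (2 / t) * (Real.sqrt A * Real.sqrt B) := by
        field_simp
        linear_combination (-(Real.sqrt B * Real.sqrt B)) * hAA - (Real.sqrt A * Real.sqrt A) * hBB
      rw [heq] at hk
      exact hk
  -- final algebra
  have hL2φ : L2norm φ = Real.sqrt A := rfl
  have hL2J : L2norm (Jop t φ) = Real.sqrt B := rfl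
  rw [hL2φ, hL2J]
  have h1 : ‖φ x‖ = Real.sqrt (‖φ x‖ ^ 2) := (Real.sqrt_sq (norm_nonneg _)).symm
  rw [h1]
  have h2 : Real.sqrt (‖φ x‖ ^ 2) ≤ Real.sqrt ((2 / t) * (Real.sqrt A * Real.sqrt B)) :=
    Real.sqrt_le_sqrt final2
  refine h2.trans (le_of_eq ?_)
  have e1 : Real.sqrt ((2 / t) * (Real.sqrt A * Real.sqrt B))
      = Real.sqrt (2 / t) * (Real.sqrt (Real.sqrt A) * Real.sqrt (Real.sqrt B)) := by
    rw [Real.sqrt_mul (by positivity), Real.sqrt_mul (Real.sqrt_nonneg A)]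
  rw [e1, Real.sqrt_div (by norm_num : (0:ℝ) ≤ 2) t, Real.rpow_neg ht.le,
    ← Real.sqrt_eq_rpow t, ← Real.sqrt_eq_rpow (Real.sqrt A), ← Real.sqrt_eq_rpow (Real.sqrt B)]
  ring
end

section
/- L² estimate of the derivative of the power nonlinearity: let p ≥ 1 and t > 0. There is a constant C depending only on p such that for every twice continuously differentiable v : (0,∞) → ℂ with v, v', J_t v ∈ L²(ℝ⁺), the function f := |v|^{p−1} v satisfies ‖f'‖_{L²(ℝ⁺)} ≤ C t^{−(p−1)/2} ‖J_t v‖_{L²(ℝ⁺)}^{(p−1)/2} ‖v‖_{L²(ℝ⁺)}^{(p−1)/2} ‖v'‖_{L²(ℝ⁺)}, and also ‖f'‖_{L²(ℝ⁺)} ≤ C ‖v'‖_{L²(ℝ⁺)}^{(p−1)/2} ‖v‖_{L²(ℝ⁺)}^{(p−1)/2} ‖v'‖_{L²(ℝ⁺)}. -/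
open MeasureTheory Set

namespace L2BoundAux

lemma hasDerivAt_normSq_comp {v : ℝ → ℂ} {x : ℝ} {z' : ℂ} (hv : HasDerivAt v z' x) :
    HasDerivAt (fun y => Complex.normSq (v y)) (2 * ((starRingEnd ℂ) (v x) * z').re) x := by
  have hre : HasDerivAt (fun y => (v y).re) z'.re x :=
    (Complex.reCLM.hasFDerivAt.comp_hasDerivAt x hv)
  have him : HasDerivAt (fun y => (v y).im) z'.im x :=
    (Complex.imCLM.hasFDerivAt.comp_hasDerivAt x hv)
  have h := (hre.mul hre).add (him.mul him)
  have heq : (fun y => (v y).re * (v y).re + (v y).im * (v y).im)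
      = fun y => Complex.normSq (v y) := by
    funext y; simp [Complex.normSq_apply]
  rw [show (((fun y => (v y).re) * fun y => (v y).re) + (fun y => (v y).im) * fun y => (v y).im) = fun y => Complex.normSq (v y) from heq] at h
  refine h.congr_deriv ?_
  simp [Complex.mul_re, Complex.conj_re, Complex.conj_im]
  ring

lemma norm_sq_eq_normSq (z : ℂ) : ‖z‖^2 = Complex.normSq z := by
  rw [Complex.sq_norm]

lemma sup_bound {v : ℝ → ℂ}
    (hD : IntegrableOn (fun y => 2 * ((starRingEnd ℂ) (v y) * deriv v y).re) (Ioi 0) volume)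
    (hv2 : IntegrableOn (fun x => ‖v x‖ ^ 2) (Ioi 0) volume)
    (hDeriv : ∀ t : ℝ, 0 < t → HasDerivAt v (deriv v t) t)
    {x : ℝ} (hx : x ∈ Ioi 0) :
    ‖v x‖^2 ≤ ∫ y in Ioi (0:ℝ), |2 * ((starRingEnd ℂ) (v y) * deriv v y).re| := by
  set D := fun y => 2 * ((starRingEnd ℂ) (v y) * deriv v y).re with hDdef
  have hx0 : (0:ℝ) < x := hx
  refine le_of_forall_pos_le_add ?_
  intro ε hε
  have hyex : ∃ y, x < y ∧ ‖v y‖^2 < ε := by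
    by_contra h
    push_neg at h
    have hconst : IntegrableOn (fun _ : ℝ => ε) (Ioi x) volume := by
      refine Integrable.mono' (hv2.mono_set (Ioi_subset_Ioi hx0.le)) aestronglyMeasurable_const ?_
      refine (ae_restrict_iff' measurableSet_Ioi).mpr (Filter.Eventually.of_forall fun y hy => ?_)
      rw [Real.norm_of_nonneg hε.le]
      exact h y hy
    have := integrable_const_iff.mp hconst
    simp [Real.volume_Ioi, hε.ne'] at this
    have h' := this.measure_univ_lt_top; simp [Real.volume_Ioi] at h'
  obtain ⟨y, hxy, hvy⟩ := hyex
  have hsub : Icc x y ⊆ Ioi (0:ℝ) := fun t ht => lt_of_lt_of_le hx0 ht.1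
  have hftc : ∫ s in x..y, D s = Complex.normSq (v y) - Complex.normSq (v x) := by
    refine intervalIntegral.integral_eq_sub_of_hasDerivAt
      (f := fun s => Complex.normSq (v s)) (fun s hs => ?_) ?_
    · rw [uIcc_of_le hxy.le] at hs
      exact hasDerivAt_normSq_comp (hDeriv s (hsub hs))
    · exact (hD.mono_set (by rw [uIcc_of_le hxy.le]; exact hsub)).intervalIntegrable
  have habs : ∫ s in x..y, D s ≥ -(∫ s in Ioi (0:ℝ), |D s|) := by
    have h1 : |∫ s in x..y, D s| ≤ ∫ s in x..y, |D s| :=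
      intervalIntegral.abs_integral_le_integral_abs hxy.le
    have h2 : ∫ s in x..y, |D s| ≤ ∫ s in Ioi (0:ℝ), |D s| := by
      rw [intervalIntegral.integral_of_le hxy.le]
      refine setIntegral_mono_set hD.abs ?_ ?_
      · exact Filter.Eventually.of_forall (fun s => abs_nonneg _)
      · exact HasSubset.Subset.eventuallyLE (fun s hs => lt_of_lt_of_le hx0 (le_of_lt hs.1))
    nlinarith [abs_le.mp h1]
  rw [hftc] at habs
  rw [norm_sq_eq_normSq]
  rw [norm_sq_eq_normSq] at hvy
  linarith

lemma CS2 {f g : ℝ → ℝ} (hfn : ∀ x, 0 ≤ f x) (hgn : ∀ x, 0 ≤ g x)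
    (hfm : AEStronglyMeasurable f (volume.restrict (Ioi 0)))
    (hgm : AEStronglyMeasurable g (volume.restrict (Ioi 0)))
    (hf2 : IntegrableOn (fun x => f x ^ 2) (Ioi 0) volume)
    (hg2 : IntegrableOn (fun x => g x ^ 2) (Ioi 0) volume) :
    ∫ y in Ioi (0:ℝ), f y * g y ≤
      Real.sqrt (∫ y in Ioi (0:ℝ), f y ^ 2) * Real.sqrt (∫ y in Ioi (0:ℝ), g y ^ 2) := by
  have hpq : Real.HolderConjugate 2 2 := Real.HolderConjugate.two_two
  have h2 : (ENNReal.ofReal (2:ℝ)) = 2 := by norm_num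
  have hfmem : MemLp f (ENNReal.ofReal (2:ℝ)) (volume.restrict (Ioi 0)) := by
    rw [h2]; exact (memLp_two_iff_integrable_sq hfm).mpr hf2
  have hgmem : MemLp g (ENNReal.ofReal (2:ℝ)) (volume.restrict (Ioi 0)) := by
    rw [h2]; exact (memLp_two_iff_integrable_sq hgm).mpr hg2
  have h := integral_mul_le_Lp_mul_Lq_of_nonneg hpq
    (Filter.Eventually.of_forall hfn) (Filter.Eventually.of_forall hgn) hfmem hgmem
  have hrw : ∀ (h : ℝ → ℝ), (∫ y in Ioi (0:ℝ), h y ^ (2:ℝ)) ^ (1/(2:ℝ))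
      = Real.sqrt (∫ y in Ioi (0:ℝ), h y ^ 2) := by
    intro h
    rw [Real.sqrt_eq_rpow]
    congr 1
    refine setIntegral_congr_fun measurableSet_Ioi fun y _ => ?_
    norm_num [Real.rpow_natCast]
  rw [hrw f, hrw g] at h
  exact h

lemma deriv_f_bound_ne {p : ℝ} {v : ℝ → ℂ} {x : ℝ} {z' : ℂ}
    (hv : HasDerivAt v z' x) (hz : v x ≠ 0) :
    HasDerivAt (fun y => ((‖v y‖ ^ (p - 1) : ℝ) : ℂ) * v y)
      ((((p-1) * ‖v x‖ ^ (p-1-1) * (((starRingEnd ℂ) (v x) * z').re / ‖v x‖) : ℝ) : ℂ) * v x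
        + ((‖v x‖ ^ (p - 1) : ℝ) : ℂ) * z') x := by
  have hnz : ‖v x‖ ≠ 0 := norm_ne_zero_iff.mpr hz
  have hnormSq : HasDerivAt (fun y => Complex.normSq (v y))
      (2 * ((starRingEnd ℂ) (v x) * z').re) x := hasDerivAt_normSq_comp hv
  have hsqne : Complex.normSq (v x) ≠ 0 := (Complex.normSq_pos.mpr hz).ne'
  have hsqrt : HasDerivAt Real.sqrt (1 / (2 * Real.sqrt (Complex.normSq (v x))))
      (Complex.normSq (v x)) := Real.hasDerivAt_sqrt hsqne
  have hnorm : HasDerivAt (fun y => ‖v y‖)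
      (((starRingEnd ℂ) (v x) * z').re / ‖v x‖) x := by
    have h := hsqrt.comp x hnormSq
    have heq : (Real.sqrt ∘ fun y => Complex.normSq (v y)) = fun y => ‖v y‖ := by
      funext y
      simp [Complex.norm_def]
    rw [heq] at h
    refine h.congr_deriv ?_
    rw [Complex.norm_def]
    field_simp
  have hg : HasDerivAt (fun y => ‖v y‖ ^ (p-1))
      ((p-1) * ‖v x‖ ^ (p-1-1) * (((starRingEnd ℂ) (v x) * z').re / ‖v x‖)) x :=
    by have := Real.hasDerivAt_rpow_const (x := ‖v x‖) (p := p - 1) (Or.inl hnz); exact this.comp x hnorm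
  have hgc : HasDerivAt (fun y => ((‖v y‖ ^ (p-1) : ℝ) : ℂ))
      ((((p-1) * ‖v x‖ ^ (p-1-1) * (((starRingEnd ℂ) (v x) * z').re / ‖v x‖) : ℝ) : ℂ)) x :=
    Complex.ofRealCLM.hasFDerivAt.comp_hasDerivAt x hg
  exact hgc.mul hv

lemma deriv_f_zero {p : ℝ} (hp : 1 < p) {v : ℝ → ℂ} {x : ℝ} {z' : ℂ}
    (hv : HasDerivAt v z' x) (hz : v x = 0) :
    HasDerivAt (fun y => ((‖v y‖ ^ (p - 1) : ℝ) : ℂ) * v y) 0 x := by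
  rw [hasDerivAt_iff_isLittleO]
  simp only [hz, norm_zero, smul_zero, sub_zero, mul_zero]
  rw [Asymptotics.isLittleO_iff]
  intro c hc
  obtain ⟨K, hK⟩ := (hv.isBigO_sub).bound
  set A := |K| + 1 with hA
  have hA0 : 0 < A := by positivity
  have hbig : ∀ᶠ y in nhds x, ‖v y‖ ≤ A * ‖y - x‖ := by
    filter_upwards [hK] with y hy
    have hKA : K ≤ A := by rw [hA]; linarith [le_abs_self K]
    have := hy.trans (mul_le_mul_of_nonneg_right hKA (norm_nonneg _))
    simpa [hz] using this
  have hsmall : ∀ᶠ y in nhds x, A ^ p * ‖y - x‖ ^ (p - 1) < c := by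
    have hcont : Filter.Tendsto (fun y : ℝ => A ^ p * ‖y - x‖ ^ (p - 1)) (nhds x) (nhds 0) := by
      have h1 : Filter.Tendsto (fun y : ℝ => ‖y - x‖) (nhds x) (nhds 0) := by
        simpa using ((continuous_sub_right x).tendsto x).norm
      have h2 : Filter.Tendsto (fun s : ℝ => A ^ p * s ^ (p - 1)) (nhds 0) (nhds 0) := by
        have h3 : Filter.Tendsto (fun s : ℝ => s ^ (p - 1)) (nhds 0) (nhds ((0:ℝ) ^ (p-1))) :=
          (Real.continuousAt_rpow_const 0 (p-1) (Or.inr (by linarith))).tendsto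
        rw [Real.zero_rpow (by linarith : p - 1 ≠ 0)] at h3
        simpa using h3.const_mul (A ^ p)
      exact h2.comp h1
    exact hcont.eventually (Filter.Tendsto.eventually_lt_const hc (Filter.tendsto_id))
  filter_upwards [hbig, hsmall] with y hy1 hy2
  have hvn : (0:ℝ) ≤ ‖v y‖ := norm_nonneg _
  have key : ‖(((‖v y‖ ^ (p - 1) : ℝ) : ℂ) * v y)‖ = ‖v y‖ ^ (p-1) * ‖v y‖ := by
    rw [norm_mul, Complex.norm_real, Real.norm_of_nonneg (Real.rpow_nonneg hvn _)]
  rw [key]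
  have h1 : ‖v y‖ ^ (p-1) ≤ (A * ‖y - x‖) ^ (p-1) :=
    Real.rpow_le_rpow hvn hy1 (by linarith)
  have h2 : ‖v y‖ ^ (p-1) * ‖v y‖ ≤ (A * ‖y - x‖) ^ (p-1) * (A * ‖y - x‖) :=
    mul_le_mul h1 hy1 hvn (Real.rpow_nonneg (by positivity) _)
  have h3 : (A * ‖y - x‖) ^ (p-1) * (A * ‖y - x‖)
      = (A ^ p * ‖y - x‖ ^ (p-1)) * ‖y - x‖ := by
    have hAp : A ^ (p-1) * A = A ^ p := by
      have h := Real.rpow_add_one hA0.ne' (p-1)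
      rw [show p - 1 + 1 = p by ring] at h
      exact h.symm
    rw [Real.mul_rpow hA0.le (norm_nonneg _), ← hAp]; ring
  calc ‖v y‖ ^ (p-1) * ‖v y‖ ≤ (A ^ p * ‖y - x‖ ^ (p-1)) * ‖y - x‖ := by rw [← h3]; exact h2
    _ ≤ c * ‖y - x‖ := mul_le_mul_of_nonneg_right hy2.le (norm_nonneg _)

lemma deriv_f_bound {p : ℝ} (hp : 1 ≤ p) {v : ℝ → ℂ} {x : ℝ} {z' : ℂ}
    (hv : HasDerivAt v z' x) :
    ‖deriv (fun y => ((‖v y‖ ^ (p - 1) : ℝ) : ℂ) * v y) x‖ ≤ p * ‖v x‖ ^ (p-1) * ‖z'‖ := by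
  rcases eq_or_ne (v x) 0 with hz | hz
  · rcases eq_or_lt_of_le hp with heq | hlt
    · subst heq
      have heqf : (fun y => ((‖v y‖ ^ ((1:ℝ) - 1) : ℝ) : ℂ) * v y) = v := by
        funext y; simp
      rw [heqf, hv.deriv]
      simp
    · rw [(deriv_f_zero hlt hv hz).deriv]
      simp [hz, Real.zero_rpow (by linarith : p - 1 ≠ 0)]
  · have hn0 : (0:ℝ) < ‖v x‖ := norm_pos_iff.mpr hz
    rw [(deriv_f_bound_ne hv hz).deriv]
    set z := v x
    have hre : |((starRingEnd ℂ) z * z').re| ≤ ‖z‖ * ‖z'‖ := by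
      calc |((starRingEnd ℂ) z * z').re| ≤ ‖(starRingEnd ℂ) z * z'‖ := Complex.abs_re_le_norm _
        _ = ‖z‖ * ‖z'‖ := by rw [norm_mul, RCLike.norm_conj]
    calc ‖(((p-1) * ‖z‖ ^ (p-1-1) * (((starRingEnd ℂ) z * z').re / ‖z‖) : ℝ) : ℂ) * z
          + ((‖z‖ ^ (p - 1) : ℝ) : ℂ) * z'‖
        ≤ ‖(((p-1) * ‖z‖ ^ (p-1-1) * (((starRingEnd ℂ) z * z').re / ‖z‖) : ℝ) : ℂ) * z‖
          + ‖((‖z‖ ^ (p - 1) : ℝ) : ℂ) * z'‖ := norm_add_le _ _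
      _ = |(p-1) * ‖z‖ ^ (p-1-1) * (((starRingEnd ℂ) z * z').re / ‖z‖)| * ‖z‖
          + ‖z‖ ^ (p-1) * ‖z'‖ := by
          rw [norm_mul, norm_mul, Complex.norm_real, Complex.norm_real, Real.norm_eq_abs,
            Real.norm_of_nonneg (Real.rpow_nonneg (norm_nonneg z) _)]
      _ ≤ p * ‖z‖ ^ (p-1) * ‖z'‖ := by
          have ha : (0:ℝ) ≤ ‖z‖ ^ (p-1-1) := Real.rpow_nonneg (norm_nonneg z) _
          have hp1 : (0:ℝ) ≤ p - 1 := by linarith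
          have hc : |((starRingEnd ℂ) z * z').re / ‖z‖| ≤ ‖z'‖ := by
            rw [abs_div, abs_of_pos hn0, div_le_iff₀ hn0]
            calc |((starRingEnd ℂ) z * z').re| ≤ ‖z‖ * ‖z'‖ := hre
              _ = ‖z'‖ * ‖z‖ := by ring
          have hz1 : ‖z‖ ^ (p-1-1) * ‖z‖ = ‖z‖ ^ (p-1) := by
            have h := Real.rpow_add_one hn0.ne' (p-1-1)
            rw [show p - 1 - 1 + 1 = p - 1 by ring] at h
            exact h.symm
          have h1 : |(p-1) * ‖z‖ ^ (p-1-1) * (((starRingEnd ℂ) z * z').re / ‖z‖)|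
              ≤ (p-1) * ‖z‖ ^ (p-1-1) * ‖z'‖ := by
            rw [abs_mul, abs_mul, abs_of_nonneg hp1, abs_of_nonneg ha]
            exact mul_le_mul_of_nonneg_left hc (mul_nonneg hp1 ha)
          have h2 : |(p-1) * ‖z‖ ^ (p-1-1) * (((starRingEnd ℂ) z * z').re / ‖z‖)| * ‖z‖
              ≤ (p-1) * ‖z‖ ^ (p-1) * ‖z'‖ := by
            calc |(p-1) * ‖z‖ ^ (p-1-1) * (((starRingEnd ℂ) z * z').re / ‖z‖)| * ‖z‖
                ≤ ((p-1) * ‖z‖ ^ (p-1-1) * ‖z'‖) * ‖z‖ := mul_le_mul_of_nonneg_right h1 hn0.le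
              _ = (p-1) * (‖z‖ ^ (p-1-1) * ‖z‖) * ‖z'‖ := by ring
              _ = (p-1) * ‖z‖ ^ (p-1) * ‖z'‖ := by rw [hz1]
          nlinarith [Real.rpow_nonneg (norm_nonneg z) (p-1), norm_nonneg z']

lemma main_est {p : ℝ} (hp : 1 ≤ p) {v : ℝ → ℂ}
    (hDeriv : ∀ s : ℝ, 0 < s → HasDerivAt v (deriv v s) s)
    (hv'2 : IntegrableOn (fun x => ‖deriv v x‖ ^ 2) (Ioi 0) volume)
    {B : ℝ} (hB : 0 ≤ B) (hsup : ∀ x ∈ Ioi (0:ℝ), ‖v x‖^2 ≤ B) :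
    L2norm (deriv (fun y => ((‖v y‖ ^ (p - 1) : ℝ) : ℂ) * v y))
      ≤ p * B ^ ((p-1)/2) * L2norm (deriv v) := by
  have hp0 : (0:ℝ) < p := by linarith
  set q : ℝ := (p-1)/2 with hq
  set g := deriv (fun y => ((‖v y‖ ^ (p - 1) : ℝ) : ℂ) * v y) with hg
  have hcoef : (0:ℝ) ≤ p * B ^ q := mul_nonneg hp0.le (Real.rpow_nonneg hB _)
  have hpt : ∀ x ∈ Ioi (0:ℝ), ‖g x‖^2 ≤ (p * B ^ q)^2 * ‖deriv v x‖^2 := by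
    intro x hx
    have h1 : ‖g x‖ ≤ p * ‖v x‖ ^ (p-1) * ‖deriv v x‖ := deriv_f_bound hp (hDeriv x hx)
    have h2 : ‖v x‖ ^ (p-1) = (‖v x‖^2 : ℝ) ^ q := by
      rw [← Real.rpow_natCast ‖v x‖ 2, ← Real.rpow_mul (norm_nonneg _),
        show ((2:ℕ):ℝ) * q = p - 1 by rw [hq]; push_cast; ring]
    have h3 : (‖v x‖^2 : ℝ) ^ q ≤ B ^ q :=
      Real.rpow_le_rpow (sq_nonneg _) (hsup x hx) (by rw [hq]; linarith)
    have h4 : ‖g x‖ ≤ p * B ^ q * ‖deriv v x‖ := by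
      calc ‖g x‖ ≤ p * ‖v x‖ ^ (p-1) * ‖deriv v x‖ := h1
        _ ≤ p * B ^ q * ‖deriv v x‖ := by
            rw [h2]
            exact mul_le_mul_of_nonneg_right
              (mul_le_mul_of_nonneg_left h3 hp0.le) (norm_nonneg _)
    calc ‖g x‖^2 ≤ (p * B ^ q * ‖deriv v x‖)^2 := pow_le_pow_left₀ (norm_nonneg _) h4 2
      _ = (p * B ^ q)^2 * ‖deriv v x‖^2 := by ring
  have hgm : AEStronglyMeasurable (fun x => ‖g x‖^2) (volume.restrict (Ioi 0)) :=
    (((measurable_deriv _).norm.pow_const 2).aestronglyMeasurable)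
  have hint : IntegrableOn (fun x => ‖g x‖^2) (Ioi 0) volume := by
    refine Integrable.mono' (hv'2.const_mul ((p * B ^ q)^2)) hgm ?_
    refine (ae_restrict_iff' measurableSet_Ioi).mpr (Filter.Eventually.of_forall fun x hx => ?_)
    rw [Real.norm_of_nonneg (sq_nonneg _)]
    exact hpt x hx
  have hmono : ∫ x in Ioi (0:ℝ), ‖g x‖^2 ≤ ∫ x in Ioi (0:ℝ), (p * B ^ q)^2 * ‖deriv v x‖^2 :=
    setIntegral_mono_on hint (hv'2.const_mul _) measurableSet_Ioi hpt
  have hpull : ∫ x in Ioi (0:ℝ), (p * B ^ q)^2 * ‖deriv v x‖^2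
      = (p * B ^ q)^2 * ∫ x in Ioi (0:ℝ), ‖deriv v x‖^2 := MeasureTheory.integral_const_mul _ _
  rw [L2norm, L2norm]
  calc Real.sqrt (∫ x in Ioi (0:ℝ), ‖g x‖^2)
      ≤ Real.sqrt ((p * B ^ q)^2 * ∫ x in Ioi (0:ℝ), ‖deriv v x‖^2) := by
        apply Real.sqrt_le_sqrt; rw [← hpull]; exact hmono
    _ = p * B ^ q * Real.sqrt (∫ x in Ioi (0:ℝ), ‖deriv v x‖^2) := by
        rw [Real.sqrt_mul (sq_nonneg _), Real.sqrt_sq hcoef]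

end L2BoundAux


open L2BoundAux in
/-- `L²` estimate of the derivative of the power nonlinearity `f = |v|^(p-1) v`. -/
theorem L2_bound_deriv_power_nonlinearity (p : ℝ) (hp : 1 ≤ p) :
    ∃ C > (0:ℝ), ∀ t : ℝ, 0 < t → ∀ v : ℝ → ℂ,
      ContDiffOn ℝ 2 v (Set.Ioi 0) →
      MeasureTheory.IntegrableOn (fun x => ‖v x‖ ^ 2) (Set.Ioi 0) →
      MeasureTheory.IntegrableOn (fun x => ‖deriv v x‖ ^ 2) (Set.Ioi 0) →
      MeasureTheory.IntegrableOn (fun x => ‖Jop t v x‖ ^ 2) (Set.Ioi 0) →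
      L2norm (deriv (fun x => ((‖v x‖ ^ (p - 1) : ℝ) : ℂ) * v x)) ≤
          C * t ^ (-(p - 1)/2) * L2norm (Jop t v) ^ ((p - 1)/2) *
            L2norm v ^ ((p - 1)/2) * L2norm (deriv v) ∧
      L2norm (deriv (fun x => ((‖v x‖ ^ (p - 1) : ℝ) : ℂ) * v x)) ≤
          C * L2norm (deriv v) ^ ((p - 1)/2) *
            L2norm v ^ ((p - 1)/2) * L2norm (deriv v) := by
  refine ⟨p * 2 ^ ((p-1)/2), mul_pos (by linarith) (Real.rpow_pos_of_pos two_pos _), ?_⟩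
  intro t ht v hv hv2 hv'2 hJ2
  set q : ℝ := (p-1)/2 with hq
  have hq0 : 0 ≤ q := by rw [hq]; linarith
  have hDeriv : ∀ s : ℝ, 0 < s → HasDerivAt v (deriv v s) s := fun s hs =>
    ((hv.contDiffAt (Ioi_mem_nhds hs)).differentiableAt (by norm_num)).hasDerivAt
  set D := fun y => 2 * ((starRingEnd ℂ) (v y) * deriv v y).re with hD
  have hvm : AEStronglyMeasurable v (volume.restrict (Ioi 0)) :=
    hv.continuousOn.aestronglyMeasurable measurableSet_Ioi
  have hv'm : AEStronglyMeasurable (deriv v) (volume.restrict (Ioi 0)) :=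
    (measurable_deriv v).aestronglyMeasurable
  have hJm : AEStronglyMeasurable (Jop t v) (volume.restrict (Ioi 0)) := by
    refine AEStronglyMeasurable.add ?_ ?_
    · exact (Complex.continuous_ofReal.aestronglyMeasurable).mul hvm
    · exact aestronglyMeasurable_const.mul hv'm
  have hDm : AEStronglyMeasurable D (volume.restrict (Ioi 0)) := by
    apply AEStronglyMeasurable.const_mul
    refine Complex.continuous_re.comp_aestronglyMeasurable ?_
    exact (Complex.continuous_conj.comp_aestronglyMeasurable hvm).mul hv'm
  have hprod : IntegrableOn (fun y => ‖v y‖ * ‖deriv v y‖) (Ioi 0) volume := by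
    refine Integrable.mono' ((hv2.add hv'2).div_const 2) (hvm.norm.mul hv'm.norm) ?_
    refine Filter.Eventually.of_forall fun y => ?_
    rw [Real.norm_of_nonneg (mul_nonneg (norm_nonneg _) (norm_nonneg _))]
    simp only [Pi.add_apply]
    nlinarith [sq_nonneg (‖v y‖ - ‖deriv v y‖)]
  have hprodJ : IntegrableOn (fun y => ‖v y‖ * ‖Jop t v y‖) (Ioi 0) volume := by
    refine Integrable.mono' ((hv2.add hJ2).div_const 2) (hvm.norm.mul hJm.norm) ?_
    refine Filter.Eventually.of_forall fun y => ?_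
    rw [Real.norm_of_nonneg (mul_nonneg (norm_nonneg _) (norm_nonneg _))]
    simp only [Pi.add_apply]
    nlinarith [sq_nonneg (‖v y‖ - ‖Jop t v y‖)]
  have hDb1 : ∀ y, |D y| ≤ 2 * (‖v y‖ * ‖deriv v y‖) := by
    intro y
    rw [hD]
    calc |2 * ((starRingEnd ℂ) (v y) * deriv v y).re|
        = 2 * |((starRingEnd ℂ) (v y) * deriv v y).re| := by rw [abs_mul]; norm_num
      _ ≤ 2 * ‖(starRingEnd ℂ) (v y) * deriv v y‖ := by
          have := Complex.abs_re_le_norm ((starRingEnd ℂ) (v y) * deriv v y)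
          linarith
      _ = 2 * (‖v y‖ * ‖deriv v y‖) := by rw [norm_mul, RCLike.norm_conj]
  have hDb2 : ∀ y, |D y| ≤ (2/t) * (‖v y‖ * ‖Jop t v y‖) := by
    intro y
    have him : ((starRingEnd ℂ) (v y) * Jop t v y).im
        = t * ((starRingEnd ℂ) (v y) * deriv v y).re := by
      simp [Jop, mul_add, Complex.mul_im, Complex.mul_re, Complex.conj_re, Complex.conj_im]
      ring
    have hDy : D y = (2/t) * ((starRingEnd ℂ) (v y) * Jop t v y).im := by
      rw [hD, him]; field_simp
    rw [hDy, abs_mul, abs_of_nonneg (by positivity : (0:ℝ) ≤ 2/t)]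
    refine mul_le_mul_of_nonneg_left ?_ (by positivity)
    have h1 : |((starRingEnd ℂ) (v y) * Jop t v y).im| ≤ ‖(starRingEnd ℂ) (v y) * Jop t v y‖ := by
      have := Complex.abs_im_le_norm ((starRingEnd ℂ) (v y) * Jop t v y)
      exact this
    have h2 : ‖(starRingEnd ℂ) (v y) * Jop t v y‖ = ‖v y‖ * ‖Jop t v y‖ := by
      rw [norm_mul, RCLike.norm_conj]
    rw [← h2]
    exact h1
  have hD_int : IntegrableOn D (Ioi 0) volume := by
    refine Integrable.mono' (hprod.const_mul 2) hDm ?_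
    exact Filter.Eventually.of_forall fun y => by simpa [Real.norm_eq_abs] using hDb1 y
  have hIabs1 : ∫ y in Ioi (0:ℝ), |D y| ≤ 2 * (L2norm v * L2norm (deriv v)) := by
    calc ∫ y in Ioi (0:ℝ), |D y| ≤ ∫ y in Ioi (0:ℝ), 2 * (‖v y‖ * ‖deriv v y‖) :=
        setIntegral_mono_on hD_int.abs (hprod.const_mul 2) measurableSet_Ioi (fun y _ => hDb1 y)
      _ = 2 * ∫ y in Ioi (0:ℝ), ‖v y‖ * ‖deriv v y‖ := MeasureTheory.integral_const_mul _ _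
      _ ≤ 2 * (L2norm v * L2norm (deriv v)) := by
          have := CS2 (fun x => norm_nonneg (v x)) (fun x => norm_nonneg (deriv v x))
            hvm.norm hv'm.norm hv2 hv'2
          rw [L2norm, L2norm]; linarith
  have hIabs2 : ∫ y in Ioi (0:ℝ), |D y| ≤ (2/t) * (L2norm v * L2norm (Jop t v)) := by
    calc ∫ y in Ioi (0:ℝ), |D y| ≤ ∫ y in Ioi (0:ℝ), (2/t) * (‖v y‖ * ‖Jop t v y‖) :=
        setIntegral_mono_on hD_int.abs (hprodJ.const_mul (2/t)) measurableSet_Ioi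
          (fun y _ => hDb2 y)
      _ = (2/t) * ∫ y in Ioi (0:ℝ), ‖v y‖ * ‖Jop t v y‖ := MeasureTheory.integral_const_mul _ _
      _ ≤ (2/t) * (L2norm v * L2norm (Jop t v)) := by
          have := CS2 (fun x => norm_nonneg (v x)) (fun x => norm_nonneg (Jop t v x))
            hvm.norm hJm.norm hv2 hJ2
          have h2t : (0:ℝ) ≤ 2/t := by positivity
          rw [L2norm, L2norm]
          exact mul_le_mul_of_nonneg_left this h2t
  have hL2v : 0 ≤ L2norm v := Real.sqrt_nonneg _
  have hL2v' : 0 ≤ L2norm (deriv v) := Real.sqrt_nonneg _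
  have hL2J : 0 ≤ L2norm (Jop t v) := Real.sqrt_nonneg _
  have hsupgen : ∀ x ∈ Ioi (0:ℝ), ‖v x‖^2 ≤ ∫ y in Ioi (0:ℝ), |D y| := fun x hx =>
    sup_bound hD_int hv2 hDeriv hx
  constructor
  · have hB2 : (0:ℝ) ≤ (2/t) * (L2norm v * L2norm (Jop t v)) := by positivity
    have hmain := main_est hp hDeriv hv'2 hB2
      (fun x hx => (hsupgen x hx).trans hIabs2)
    refine hmain.trans (le_of_eq ?_)
    rw [Real.mul_rpow (by positivity) (mul_nonneg hL2v hL2J),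
      Real.mul_rpow hL2v hL2J,
      Real.div_rpow (by norm_num) ht.le,
      show -(p-1)/2 = -q by rw [hq]; ring,
      Real.rpow_neg ht.le, div_eq_mul_inv]
    ring
  · have hB1 : (0:ℝ) ≤ 2 * (L2norm v * L2norm (deriv v)) := by positivity
    have hmain := main_est hp hDeriv hv'2 hB1
      (fun x hx => (hsupgen x hx).trans hIabs1)
    refine hmain.trans (le_of_eq ?_)
    rw [Real.mul_rpow (by norm_num) (mul_nonneg hL2v hL2v'),
      Real.mul_rpow hL2v hL2v']
    ring
end

section
/- L² estimate of J applied to the power nonlinearity: let p ≥ 1 and t > 0. There is a constant C depending only on p such that for every continuously differentiable v : (0,∞) → ℂ with v, v', J_t v ∈ L²(ℝ⁺), the function f := |v|^{p−1} v satisfies ‖J_t f‖_{L²(ℝ⁺)} ≤ C t^{−(p−1)/2} ‖v‖_{L²(ℝ⁺)}^{(p−1)/2} ‖J_t v‖_{L²(ℝ⁺)}^{(p+1)/2}, and also ‖J_t f‖_{L²(ℝ⁺)} ≤ C ‖v‖_{L²(ℝ⁺)}^{(p−1)/2} ‖v'‖_{L²(ℝ⁺)}^{(p−1)/2} ‖J_t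 v‖_{L²(ℝ⁺)}. -/
open MeasureTheory Set

section Auxiliary
open Complex Filter Asymptotics

lemma cs_integral (u w : ℝ → ℂ)
    (hu : AEStronglyMeasurable u (volume.restrict (Ioi 0)))
    (hw : AEStronglyMeasurable w (volume.restrict (Ioi 0)))
    (hu2 : IntegrableOn (fun x => ‖u x‖^2) (Ioi 0))
    (hw2 : IntegrableOn (fun x => ‖w x‖^2) (Ioi 0)) :
    ∫ x in Ioi (0:ℝ), ‖u x‖ * ‖w x‖ ≤
      Real.sqrt (∫ x in Ioi (0:ℝ), ‖u x‖^2) * Real.sqrt (∫ x in Ioi (0:ℝ), ‖w x‖^2) := by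
  have hpq : Real.HolderConjugate 2 2 := by constructor <;> norm_num
  have h2 : (ENNReal.ofReal (2:ℝ)) = 2 := by norm_num
  have hmu : MemLp u (ENNReal.ofReal (2:ℝ)) (volume.restrict (Ioi 0)) := by
    rw [h2]; exact (memLp_two_iff_integrable_sq_norm hu).2 hu2
  have hmw : MemLp w (ENNReal.ofReal (2:ℝ)) (volume.restrict (Ioi 0)) := by
    rw [h2]; exact (memLp_two_iff_integrable_sq_norm hw).2 hw2
  have h := integral_mul_norm_le_Lp_mul_Lq hpq hmu hmw
  have e1 : ∀ g : ℝ → ℂ, (∫ x in Ioi (0:ℝ), ‖g x‖ ^ (2:ℝ)) = ∫ x in Ioi (0:ℝ), ‖g x‖^2 := by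
    intro g; refine integral_congr_ae (Filter.Eventually.of_forall fun x => ?_)
    simp [Real.rpow_natCast]
  calc ∫ x in Ioi (0:ℝ), ‖u x‖ * ‖w x‖
      ≤ (∫ x in Ioi (0:ℝ), ‖u x‖ ^ (2:ℝ)) ^ (1/(2:ℝ)) * (∫ x in Ioi (0:ℝ), ‖w x‖ ^ (2:ℝ)) ^ (1/(2:ℝ)) := h
    _ = _ := by rw [e1, e1, ← Real.sqrt_eq_rpow, ← Real.sqrt_eq_rpow]

lemma sup_sq_le (u u' : ℝ → ℂ)
    (hd : ∀ y ∈ Ioi (0:ℝ), HasDerivAt u (u' y) y)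
    (hum : AEStronglyMeasurable u (volume.restrict (Ioi 0)))
    (hu'm : AEStronglyMeasurable u' (volume.restrict (Ioi 0)))
    (hu2 : IntegrableOn (fun y => ‖u y‖^2) (Ioi 0))
    (hu'2 : IntegrableOn (fun y => ‖u' y‖^2) (Ioi 0))
    {x : ℝ} (hx : x ∈ Ioi (0:ℝ)) :
    ‖u x‖^2 ≤ 2 * Real.sqrt (∫ y in Ioi (0:ℝ), ‖u y‖^2) *
      Real.sqrt (∫ y in Ioi (0:ℝ), ‖u' y‖^2) := by
  set F : ℝ → ℝ := fun y => ‖u y‖^2 with hF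
  set F' : ℝ → ℝ := fun y => 2 * (inner ℝ (u y) (u' y) : ℝ) with hF'
  have hFd : ∀ y ∈ Ioi (0:ℝ), HasDerivAt F (F' y) y := fun y hy => (hd y hy).norm_sq
  have hF'bd : ∀ y, |F' y| ≤ 2 * (‖u y‖ * ‖u' y‖) := by
    intro y
    have h1 := abs_real_inner_le_norm (u y) (u' y)
    rw [hF', abs_mul]
    have h2 : |(2:ℝ)| = 2 := by norm_num
    rw [h2]
    nlinarith [norm_nonneg (u y), norm_nonneg (u' y)]
  -- integrability of the product bound
  have hprod : IntegrableOn (fun y => 2 * (‖u y‖ * ‖u' y‖)) (Ioi 0) := by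
    refine Integrable.mono' (hu2.add hu'2) ?_ ?_
    · exact ((hum.norm.mul hu'm.norm).const_mul 2)
    · refine Filter.Eventually.of_forall fun y => ?_
      rw [Real.norm_of_nonneg (by positivity)]
      have := two_mul_le_add_sq (‖u y‖) (‖u' y‖)
      simpa [mul_assoc] using this
  have hF'int : IntegrableOn F' (Ioi 0) := by
    refine Integrable.mono' hprod ?_ ?_
    · exact (hum.inner (𝕜 := ℝ) hu'm).const_mul 2
    · exact Filter.Eventually.of_forall fun y => hF'bd y
  -- Cauchy-Schwarz tail bound
  have hcs : ∫ y in Ioi (0:ℝ), ‖u y‖ * ‖u' y‖ ≤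
      Real.sqrt (∫ y in Ioi (0:ℝ), ‖u y‖^2) * Real.sqrt (∫ y in Ioi (0:ℝ), ‖u' y‖^2) :=
    cs_integral u u' hum hu'm hu2 hu'2
  set c : ℝ := 2 * Real.sqrt (∫ y in Ioi (0:ℝ), ‖u y‖^2) *
      Real.sqrt (∫ y in Ioi (0:ℝ), ‖u' y‖^2) with hc
  have key : ∀ y, x ≤ y → F x ≤ F y + c := by
    intro y hxy
    have hsub : Set.uIcc x y ⊆ Ioi (0:ℝ) := by
      rw [Set.uIcc_of_le hxy]
      exact fun z hz => lt_of_lt_of_le hx hz.1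
    have hftc : ∫ z in x..y, F' z = F y - F x := by
      refine intervalIntegral.integral_eq_sub_of_hasDerivAt (fun z hz => hFd z (hsub hz)) ?_
      exact (hF'int.mono_set hsub).intervalIntegrable
    have h1 : F x = F y - ∫ z in x..y, F' z := by rw [hftc]; ring
    have h2 : |∫ z in x..y, F' z| ≤ ∫ z in x..y, |F' z| := by
      simpa [Real.norm_eq_abs] using
        intervalIntegral.norm_integral_le_integral_norm (f := F') (a := x) (b := y) hxy
    have h3 : ∫ z in x..y, |F' z| ≤ ∫ z in Ioi (0:ℝ), |F' z| := by
      rw [intervalIntegral.integral_of_le hxy]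
      refine setIntegral_mono_set hF'int.abs ?_ ?_
      · exact Filter.Eventually.of_forall fun z => abs_nonneg _
      · refine HasSubset.Subset.eventuallyLE fun z hz => lt_trans hx hz.1
    have h4 : ∫ z in Ioi (0:ℝ), |F' z| ≤ ∫ z in Ioi (0:ℝ), 2 * (‖u z‖ * ‖u' z‖) :=
      integral_mono hF'int.abs hprod hF'bd
    have h5 : ∫ z in Ioi (0:ℝ), 2 * (‖u z‖ * ‖u' z‖) ≤ c := by
      rw [integral_const_mul, hc, mul_assoc]
      nlinarith [hcs]
    have := neg_abs_le (∫ z in x..y, F' z)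
    calc F x = F y - ∫ z in x..y, F' z := h1
      _ ≤ F y + |∫ z in x..y, F' z| := by cases abs_cases (∫ z in x..y, F' z) <;> linarith
      _ ≤ F y + c := by linarith
  -- F gets small along a sequence
  show F x ≤ c
  refine le_of_forall_pos_le_add fun ε hε => ?_
  by_contra hcon
  push_neg at hcon
  have hall : ∀ y, x ≤ y → ε ≤ F y := by
    intro y hxy
    by_contra h
    push_neg at h
    exact absurd (key y hxy) (by linarith)
  have hconst : Integrable (fun _ : ℝ => ε) (volume.restrict (Ioi x)) := by
    refine Integrable.mono' (hu2.mono_set (Ioi_subset_Ioi (le_of_lt hx))) aestronglyMeasurable_const ?_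
    refine (ae_restrict_iff' measurableSet_Ioi).2 (Filter.Eventually.of_forall fun y hy => ?_)
    rw [Real.norm_of_nonneg (le_of_lt hε)]
    exact hall y (le_of_lt hy)
  rw [integrable_const_iff] at hconst
  rcases hconst with h | h
  · exact absurd h (by positivity)
  · have h := h.measure_univ_lt_top; rw [Measure.restrict_apply_univ, Real.volume_Ioi] at h
    exact absurd h (by simp)

lemma power_deriv (p : ℝ) (hp : 1 ≤ p) (u : ℝ → ℂ) (d : ℂ) (x : ℝ)
    (h : HasDerivAt u d x) :
    ∃ D : ℂ, HasDerivAt (fun y => ((‖u y‖ ^ (p-1) : ℝ) : ℂ) * u y) D x ∧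
      ‖D‖ ≤ p * ‖u x‖ ^ (p-1) * ‖d‖ := by
  rcases eq_or_lt_of_le hp with hp1 | hp1
  · -- p = 1
    refine ⟨d, ?_, ?_⟩
    · have he : (fun y => ((‖u y‖ ^ (p-1) : ℝ) : ℂ) * u y) = u := by
        funext y; rw [← hp1]; simp
      rw [he]; exact h
    · rw [← hp1]; simp
  rcases eq_or_ne (u x) 0 with hu0 | hu0
  · -- u x = 0, p > 1
    refine ⟨0, ?_, ?_⟩
    · rw [hasDerivAt_iff_isLittleO]
      simp only [hu0, norm_zero, smul_zero, mul_zero, sub_zero]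
      rw [isLittleO_iff]
      intro c hc
      obtain ⟨C, hC, hev⟩ : ∃ C > 0, ∀ᶠ y in nhds x, ‖u y - u x‖ ≤ C * ‖y - x‖ := by
        rcases (h.isBigO_sub).bound with ⟨C0, hC0⟩
        exact ⟨max C0 1, lt_of_lt_of_le one_pos (le_max_right _ _),
          hC0.mono fun y hy => le_trans hy
            (mul_le_mul_of_nonneg_right (le_max_left _ _) (norm_nonneg _))⟩
      have hcont : Tendsto (fun y => ‖u y‖ ^ (p-1)) (nhds x) (nhds 0) := by
        have h1 : Tendsto (fun y => ‖u y‖) (nhds x) (nhds 0) := by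
          have := (h.continuousAt.tendsto).norm
          rwa [hu0, norm_zero] at this
        have h2 : ContinuousAt (fun s : ℝ => s ^ (p-1)) 0 :=
          (Real.continuousAt_rpow_const 0 (p-1) (Or.inr (by linarith))).mono_left le_rfl
        have := h2.tendsto.comp h1
        rwa [Real.zero_rpow (by linarith : p - 1 ≠ 0)] at this
      have hev2 : ∀ᶠ y in nhds x, ‖u y‖ ^ (p-1) ≤ c / C :=
        hcont.eventually_le_const (by positivity)
      filter_upwards [hev, hev2] with y h1 h2
      rw [hu0, sub_zero] at h1
      have : ‖((‖u y‖ ^ (p-1) : ℝ) : ℂ) * u y‖ = ‖u y‖ ^ (p-1) * ‖u y‖ := by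
        rw [norm_mul, Complex.norm_real, Real.norm_of_nonneg (Real.rpow_nonneg (norm_nonneg _) _)]
      rw [this]
      calc ‖u y‖ ^ (p-1) * ‖u y‖ ≤ (c / C) * (C * ‖y - x‖) := by
            refine mul_le_mul h2 h1 (norm_nonneg _) (by positivity)
        _ = c * ‖y - x‖ := by field_simp
    · simp [hu0, Real.zero_rpow (by linarith : p - 1 ≠ 0)]
  · -- u x ≠ 0, p > 1
    have hpos : 0 < ‖u x‖ := norm_pos_iff.2 hu0
    set q : ℝ := (p-1)/2 with hq
    have hq0 : 0 < q := by rw [hq]; linarith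
    have hn : HasDerivAt (fun y => ‖u y‖^2) (2 * (inner ℝ (u x) d : ℝ)) x := h.norm_sq
    have hsq : (0:ℝ) < ‖u x‖^2 := by positivity
    have hrp := (Real.hasDerivAt_rpow_const (x := ‖u x‖^2) (p := q) (Or.inl (ne_of_gt hsq)))
    have hφ : HasDerivAt (fun y => (‖u y‖^2) ^ q)
        (q * (‖u x‖^2) ^ (q-1) * (2 * (inner ℝ (u x) d : ℝ))) x := (hrp.comp x hn :)
    set φ' : ℝ := q * (‖u x‖^2) ^ (q-1) * (2 * (inner ℝ (u x) d : ℝ)) with hφ'def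
    have heq : ∀ y : ℝ, (‖u y‖^2 : ℝ) ^ q = ‖u y‖ ^ (p-1) := by
      intro y
      rw [← Real.rpow_natCast (‖u y‖) 2, ← Real.rpow_mul (norm_nonneg _)]
      congr 1
      push_cast
      rw [hq]; ring
    have hD : HasDerivAt (fun y => ((‖u y‖ ^ (p-1) : ℝ) : ℂ) * u y)
        ((φ' : ℂ) * u x + ((‖u x‖ ^ (p-1) : ℝ) : ℂ) * d) x := by
      have := (hφ.ofReal_comp).mul h
      simp only [heq] at this
      exact this
    refine ⟨_, hD, ?_⟩
    have hinner : |(inner ℝ (u x) d : ℝ)| ≤ ‖u x‖ * ‖d‖ := abs_real_inner_le_norm _ _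
    have hφ'bd : |φ'| ≤ (p-1) * ‖u x‖ ^ (p-2) * ‖d‖ := by
      rw [hφ'def, abs_mul, abs_mul]
      have h1 : |q| = q := abs_of_pos hq0
      have h2 : |(‖u x‖^2 : ℝ) ^ (q-1)| = (‖u x‖^2) ^ (q-1) :=
        abs_of_pos (Real.rpow_pos_of_pos hsq _)
      have h3 : |2 * (inner ℝ (u x) d : ℝ)| ≤ 2 * (‖u x‖ * ‖d‖) := by
        rw [abs_mul]
        have : |(2:ℝ)| = 2 := by norm_num
        rw [this]
        linarith
      have h4 : (‖u x‖^2 : ℝ) ^ (q-1) = ‖u x‖ ^ (p - 3) := by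
        rw [← Real.rpow_natCast (‖u x‖) 2, ← Real.rpow_mul (norm_nonneg _)]
        congr 1
        push_cast
        rw [hq]; ring
      have h5 : ‖u x‖ ^ (p-3) * ‖u x‖ = ‖u x‖ ^ (p-2) := by
        nth_rewrite 2 [← Real.rpow_one (‖u x‖)]
        rw [← Real.rpow_add hpos]
        congr 1; ring
      rw [h1, h2, h4]
      calc q * (‖u x‖ ^ (p-3)) * |2 * (inner ℝ (u x) d : ℝ)|
          ≤ q * (‖u x‖ ^ (p-3)) * (2 * (‖u x‖ * ‖d‖)) := by
            refine mul_le_mul_of_nonneg_left h3 (by positivity)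
        _ = (2*q) * (‖u x‖ ^ (p-3) * ‖u x‖) * ‖d‖ := by ring
        _ = (p-1) * ‖u x‖ ^ (p-2) * ‖d‖ := by rw [h5, hq]; ring_nf
    have hnorm : ‖(φ' : ℂ) * u x + ((‖u x‖ ^ (p-1) : ℝ) : ℂ) * d‖ ≤
        |φ'| * ‖u x‖ + ‖u x‖ ^ (p-1) * ‖d‖ := by
      refine le_trans (norm_add_le _ _) ?_
      rw [norm_mul, norm_mul, Complex.norm_real, Complex.norm_real, Real.norm_eq_abs,
        Real.norm_eq_abs, _root_.abs_of_nonneg (Real.rpow_nonneg (norm_nonneg (u x)) (p-1))]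
    refine le_trans hnorm ?_
    have h6 : ‖u x‖ ^ (p-2) * ‖u x‖ = ‖u x‖ ^ (p-1) := by
      nth_rewrite 2 [← Real.rpow_one (‖u x‖)]
      rw [← Real.rpow_add hpos]
      congr 1; ring
    have h7 : |φ'| * ‖u x‖ ≤ (p-1) * ‖u x‖ ^ (p-1) * ‖d‖ := by
      calc |φ'| * ‖u x‖ ≤ ((p-1) * ‖u x‖ ^ (p-2) * ‖d‖) * ‖u x‖ :=
            mul_le_mul_of_nonneg_right hφ'bd (norm_nonneg _)
        _ = (p-1) * (‖u x‖ ^ (p-2) * ‖u x‖) * ‖d‖ := by ring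
        _ = (p-1) * ‖u x‖ ^ (p-1) * ‖d‖ := by rw [h6]
    nlinarith [Real.rpow_nonneg (norm_nonneg (u x)) (p-1), norm_nonneg d]

lemma key_pointwise (p : ℝ) (hp : 1 ≤ p) (t : ℝ) (ht : 0 < t)
    (v : ℝ → ℂ) (x : ℝ) (hv : DifferentiableAt ℝ v x) :
    ‖Jop t (fun y => ((‖v y‖ ^ (p-1) : ℝ) : ℂ) * v y) x‖ ≤
      p * ‖v x‖ ^ (p-1) * ‖Jop t v x‖ := by
  have ht' : (t:ℂ) ≠ 0 := by exact_mod_cast ne_of_gt ht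
  set θ : ℝ → ℝ := fun y => y^2/(2*t) with hθdef
  set E : ℝ → ℂ := fun y => Complex.exp (((θ y : ℝ) : ℂ) * Complex.I) with hEdef
  set Em : ℝ → ℂ := fun y => Complex.exp (-((θ y : ℝ) : ℂ) * Complex.I) with hEmdef
  have hEnorm : ∀ y, ‖E y‖ = 1 := fun y => Complex.norm_exp_ofReal_mul_I (θ y)
  have hEmnorm : ∀ y, ‖Em y‖ = 1 := by
    intro y
    have : -((θ y : ℝ) : ℂ) * Complex.I = (((-θ y : ℝ)) : ℂ) * Complex.I := by push_cast; ring
    rw [hEmdef]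
    simp only [this]
    exact Complex.norm_exp_ofReal_mul_I _
  have hEEm : ∀ y, E y * Em y = 1 := by
    intro y
    rw [hEdef, hEmdef]
    simp only [← Complex.exp_add]
    ring_nf
    exact Complex.exp_zero
  have hθ : HasDerivAt θ (x/t) x := by
    have h1 : HasDerivAt (fun y : ℝ => y^2) (2*x) x := by
      simpa using hasDerivAt_pow 2 x
    have := h1.div_const (2*t)
    refine this.congr_deriv ?_
    rw [mul_div_mul_left _ _ two_ne_zero]
  have hE : HasDerivAt E ((((x/t : ℝ)) : ℂ) * Complex.I * E x) x := by
    have h1 : HasDerivAt (fun y => ((θ y : ℝ) : ℂ) * Complex.I)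
        ((((x/t : ℝ)) : ℂ) * Complex.I) x := (hθ.ofReal_comp).mul_const Complex.I
    simpa [hEdef, mul_comm] using h1.cexp
  have hEm : HasDerivAt Em (-(((x/t : ℝ)) : ℂ) * Complex.I * Em x) x := by
    have h1 : HasDerivAt (fun y => -((θ y : ℝ) : ℂ) * Complex.I)
        (-(((x/t : ℝ)) : ℂ) * Complex.I) x := ((hθ.ofReal_comp).neg).mul_const Complex.I
    simpa [hEmdef, mul_comm] using h1.cexp
  set w : ℝ → ℂ := fun y => Em y * v y with hwdef
  set Dw : ℂ := (-(((x/t : ℝ)) : ℂ) * Complex.I * Em x) * v x + Em x * deriv v x with hDw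
  have hw : HasDerivAt w Dw x := hEm.mul hv.hasDerivAt
  have hwnorm : ∀ y, ‖w y‖ = ‖v y‖ := by
    intro y; rw [hwdef]; simp [norm_mul, hEmnorm y]
  obtain ⟨D, hD, hDb⟩ := power_deriv p hp w Dw x hw
  -- the algebraic identity
  have calc1 : ∀ a b Dd : ℂ, (x:ℂ) * (a*b) + Complex.I * t *
      (((((x/t : ℝ)) : ℂ) * Complex.I * a) * b + a * Dd) = Complex.I * t * (a * Dd) := by
    intro a b Dd
    have hI := Complex.I_sq
    push_cast
    field_simp
    ring_nf
    rw [Complex.I_sq]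
    ring
  -- v = E * w
  have hveq : v = fun y => E y * w y := by
    funext y
    rw [hwdef]
    have := hEEm y
    calc v y = (E y * Em y) * v y := by rw [this]; ring
      _ = E y * (Em y * v y) := by ring
  -- derivative of v via E * w
  have hvd : HasDerivAt v (((((x/t : ℝ)) : ℂ) * Complex.I * E x) * w x + E x * Dw) x := by
    rw [hveq]; exact hE.mul hw
  have hJv : Jop t v x = Complex.I * t * (E x * Dw) := by
    rw [Jop]
    rw [hvd.deriv]
    have : (x:ℂ) * v x = (x:ℂ) * (E x * w x) := by rw [hveq]
    rw [this]
    exact calc1 (E x) (w x) Dw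
  -- f = E * (|w|^{p-1} w)
  set g : ℝ → ℂ := fun y => ((‖w y‖ ^ (p-1) : ℝ) : ℂ) * w y with hgdef
  have hfeq : (fun y => ((‖v y‖ ^ (p-1) : ℝ) : ℂ) * v y) = fun y => E y * g y := by
    funext y
    rw [hgdef]
    simp only [← hwnorm y]
    calc ((‖w y‖ ^ (p-1) : ℝ) : ℂ) * v y
        = ((‖w y‖ ^ (p-1) : ℝ) : ℂ) * ((E y * Em y) * v y) := by rw [hEEm y]; ring
      _ = E y * (((‖w y‖ ^ (p-1) : ℝ) : ℂ) * (Em y * v y)) := by ring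
  have hfd : HasDerivAt (fun y => ((‖v y‖ ^ (p-1) : ℝ) : ℂ) * v y)
      (((((x/t : ℝ)) : ℂ) * Complex.I * E x) * g x + E x * D) x := by
    rw [hfeq]; exact hE.mul hD
  have hJf : Jop t (fun y => ((‖v y‖ ^ (p-1) : ℝ) : ℂ) * v y) x
      = Complex.I * t * (E x * D) := by
    rw [Jop]
    rw [hfd.deriv]
    have h2 : (x:ℂ) * (((‖v x‖ ^ (p-1) : ℝ) : ℂ) * v x) = (x:ℂ) * (E x * g x) := by
      rw [congrFun hfeq x]
    rw [h2]
    exact calc1 (E x) (g x) D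
  -- norms
  have hnJf : ‖Jop t (fun y => ((‖v y‖ ^ (p-1) : ℝ) : ℂ) * v y) x‖ = t * ‖D‖ := by
    rw [hJf]
    simp [norm_mul, hEnorm x, Complex.norm_real, abs_of_pos ht]
  have hnJv : ‖Jop t v x‖ = t * ‖Dw‖ := by
    rw [hJv]
    simp [norm_mul, hEnorm x, abs_of_pos ht]
  rw [hnJf, hnJv, hwnorm x] at *
  calc t * ‖D‖ ≤ t * (p * ‖v x‖ ^ (p-1) * ‖Dw‖) :=
        mul_le_mul_of_nonneg_left hDb (le_of_lt ht)
    _ = p * ‖v x‖ ^ (p-1) * (t * ‖Dw‖) := by ring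

lemma Jop_norm_eq (t : ℝ) (ht : 0 < t) (v : ℝ → ℂ) (y : ℝ) :
    t * ‖deriv v y - (((y/t : ℝ)) : ℂ) * Complex.I * v y‖ = ‖Jop t v y‖ := by
  have ht' : (t:ℂ) ≠ 0 := by exact_mod_cast ne_of_gt ht
  have key : (t:ℂ) * (deriv v y - (((y/t : ℝ)) : ℂ) * Complex.I * v y)
      = -Complex.I * Jop t v y := by
    rw [Jop]
    push_cast
    field_simp
    ring_nf
    rw [Complex.I_sq]
    ring
  have := congrArg norm key
  rw [norm_mul, norm_mul, Complex.norm_real, Real.norm_of_nonneg (le_of_lt ht)] at this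
  simpa using this

end Auxiliary

/-- `L²` estimate of `J` applied to the power nonlinearity `f = |v|^(p-1) v`. -/
theorem L2_bound_J_power_nonlinearity (p : ℝ) (hp : 1 ≤ p) :
    ∃ C > (0:ℝ), ∀ t : ℝ, 0 < t → ∀ v : ℝ → ℂ,
      ContDiffOn ℝ 1 v (Set.Ioi 0) →
      MeasureTheory.IntegrableOn (fun x => ‖v x‖ ^ 2) (Set.Ioi 0) →
      MeasureTheory.IntegrableOn (fun x => ‖deriv v x‖ ^ 2) (Set.Ioi 0) →
      MeasureTheory.IntegrableOn (fun x => ‖Jop t v x‖ ^ 2) (Set.Ioi 0) →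
      L2norm (Jop t (fun x => ((‖v x‖ ^ (p - 1) : ℝ) : ℂ) * v x)) ≤
          C * t ^ (-(p - 1)/2) * L2norm v ^ ((p - 1)/2) *
            L2norm (Jop t v) ^ ((p + 1)/2) ∧
      L2norm (Jop t (fun x => ((‖v x‖ ^ (p - 1) : ℝ) : ℂ) * v x)) ≤
          C * L2norm v ^ ((p - 1)/2) * L2norm (deriv v) ^ ((p - 1)/2) *
            L2norm (Jop t v) := by
  refine ⟨p * 2 ^ ((p-1)/2), by positivity, fun t ht v hv hv2 hv'2 hJ2 => ?_⟩
  have hq0 : (0:ℝ) ≤ (p-1)/2 := by linarith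
  -- differentiability on the half line
  have hdiff : ∀ x ∈ Ioi (0:ℝ), DifferentiableAt ℝ v x := fun x hx =>
    ((hv.differentiableOn one_ne_zero) x hx).differentiableAt (isOpen_Ioi.mem_nhds hx)
  -- measurability
  have hvm : AEStronglyMeasurable v (volume.restrict (Ioi 0)) :=
    (hv.continuousOn).aestronglyMeasurable measurableSet_Ioi
  have hv'm : AEStronglyMeasurable (deriv v) (volume.restrict (Ioi 0)) :=
    (measurable_deriv v).aestronglyMeasurable.restrict
  -- abbreviations
  set A := L2norm v with hA
  set B1 := L2norm (deriv v) with hB1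
  set BJ := L2norm (Jop t v) with hBJ
  have hA0 : 0 ≤ A := Real.sqrt_nonneg _
  have hB10 : 0 ≤ B1 := Real.sqrt_nonneg _
  have hBJ0 : 0 ≤ BJ := Real.sqrt_nonneg _
  -- first sup estimate via v and v'
  have sup1 : ∀ x ∈ Ioi (0:ℝ), ‖v x‖^2 ≤ 2 * A * B1 := by
    intro x hx
    exact sup_sq_le v (deriv v) (fun y hy => (hdiff y hy).hasDerivAt) hvm hv'm hv2 hv'2 hx
  -- the gauge-transformed function W
  set W : ℝ → ℂ := fun y => Complex.exp (-(((y^2/(2*t) : ℝ)) : ℂ) * Complex.I) * v y with hWdef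
  set W' : ℝ → ℂ := fun y => Complex.exp (-(((y^2/(2*t) : ℝ)) : ℂ) * Complex.I) *
      (deriv v y - (((y/t : ℝ)) : ℂ) * Complex.I * v y) with hW'def
  have hexpnorm : ∀ s : ℝ, ‖Complex.exp (-((s : ℂ)) * Complex.I)‖ = 1 := by
    intro s
    have : -((s:ℝ) : ℂ) * Complex.I = (((-s : ℝ)) : ℂ) * Complex.I := by push_cast; ring
    rw [this]
    exact Complex.norm_exp_ofReal_mul_I _
  have hWnorm : ∀ y, ‖W y‖ = ‖v y‖ := by
    intro y; rw [hWdef]; rw [norm_mul, hexpnorm, one_mul]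
  have hW'norm : ∀ y, ‖W' y‖ = ‖Jop t v y‖ / t := by
    intro y
    rw [hW'def]
    show ‖Complex.exp _ * _‖ = _
    rw [norm_mul, hexpnorm, one_mul, ← Jop_norm_eq t ht v y]
    field_simp
  have hWd : ∀ x ∈ Ioi (0:ℝ), HasDerivAt W (W' x) x := by
    intro x hx
    have ht' : (t:ℝ) ≠ 0 := ne_of_gt ht
    have hθ : HasDerivAt (fun y : ℝ => y^2/(2*t)) (x/t) x := by
      have h1 : HasDerivAt (fun y : ℝ => y^2) (2*x) x := by simpa using hasDerivAt_pow 2 x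
      have := h1.div_const (2*t)
      refine this.congr_deriv ?_
      rw [mul_div_mul_left _ _ two_ne_zero]
    have hE : HasDerivAt (fun y : ℝ => Complex.exp (-(((y^2/(2*t) : ℝ)) : ℂ) * Complex.I))
        (-(((x/t : ℝ)) : ℂ) * Complex.I *
          Complex.exp (-(((x^2/(2*t) : ℝ)) : ℂ) * Complex.I)) x := by
      have h1 : HasDerivAt (fun y : ℝ => -(((y^2/(2*t) : ℝ)) : ℂ) * Complex.I)
          (-(((x/t : ℝ)) : ℂ) * Complex.I) x := (hθ.ofReal_comp.neg).mul_const Complex.I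
      simpa [mul_comm] using h1.cexp
    have := hE.mul (hdiff x hx).hasDerivAt
    refine this.congr_deriv ?_
    rw [hW'def]
    ring
  have hW'm : AEStronglyMeasurable W' (volume.restrict (Ioi 0)) := by
    have hc1 : Continuous (fun y : ℝ => Complex.exp (-(((y^2/(2*t) : ℝ)) : ℂ) * Complex.I)) := by
      fun_prop
    have hc2 : Continuous (fun y : ℝ => (((y/t : ℝ)) : ℂ) * Complex.I) := by fun_prop
    exact (hc1.aestronglyMeasurable.restrict).mul
      (hv'm.sub ((hc2.aestronglyMeasurable.restrict).mul hvm))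
  have hWm : AEStronglyMeasurable W (volume.restrict (Ioi 0)) := by
    have hc1 : Continuous (fun y : ℝ => Complex.exp (-(((y^2/(2*t) : ℝ)) : ℂ) * Complex.I)) := by
      fun_prop
    exact (hc1.aestronglyMeasurable.restrict).mul hvm
  have hW2 : IntegrableOn (fun y => ‖W y‖^2) (Ioi 0) := by
    have : (fun y => ‖W y‖^2) = (fun y => ‖v y‖^2) := by funext y; rw [hWnorm]
    rw [this]; exact hv2
  have hW'2 : IntegrableOn (fun y => ‖W' y‖^2) (Ioi 0) := by
    have : (fun y => ‖W' y‖^2) = (fun y => (1/t^2) * ‖Jop t v y‖^2) := by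
      funext y; rw [hW'norm]; field_simp
    rw [this]
    exact hJ2.const_mul _
  have hIW' : Real.sqrt (∫ y in Ioi (0:ℝ), ‖W' y‖^2) = BJ / t := by
    have h1 : (fun y => ‖W' y‖^2) = (fun y => (1/t^2) * ‖Jop t v y‖^2) := by
      funext y; rw [hW'norm]; field_simp
    rw [show (∫ y in Ioi (0:ℝ), ‖W' y‖^2) = ∫ y in Ioi (0:ℝ), (1/t^2) * ‖Jop t v y‖^2 by rw [h1]]
    rw [integral_const_mul, Real.sqrt_mul (by positivity)]
    rw [hBJ, L2norm]
    rw [show (1/t^2 : ℝ) = (1/t)^2 by ring, Real.sqrt_sq (by positivity)]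
    ring
  have sup2 : ∀ x ∈ Ioi (0:ℝ), ‖v x‖^2 ≤ 2 * A * (BJ / t) := by
    intro x hx
    have := sup_sq_le W W' hWd hWm hW'm hW2 hW'2 hx
    rw [hWnorm] at this
    refine le_trans this ?_
    rw [hIW']
    have : Real.sqrt (∫ y in Ioi (0:ℝ), ‖W y‖^2) = A := by
      rw [show (fun y => ‖W y‖^2) = (fun y => ‖v y‖^2) from funext fun y => by rw [hWnorm]]
      rfl
    rw [this]
  -- pointwise bound and integral step
  have hpt : ∀ x ∈ Ioi (0:ℝ), ‖Jop t (fun y => ((‖v y‖ ^ (p-1) : ℝ) : ℂ) * v y) x‖ ≤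
      p * ‖v x‖ ^ (p-1) * ‖Jop t v x‖ := fun x hx =>
    key_pointwise p hp t ht v x (hdiff x hx)
  -- measurability of the J of the nonlinearity
  set f : ℝ → ℂ := fun y => ((‖v y‖ ^ (p-1) : ℝ) : ℂ) * v y with hfdef
  have hJfm : AEStronglyMeasurable (fun x => ‖Jop t f x‖^2) (volume.restrict (Ioi 0)) := by
    have hrc : Continuous (fun s : ℝ => s ^ (p-1)) := by
      rw [continuous_iff_continuousAt]
      exact fun s => Real.continuousAt_rpow_const s (p-1) (Or.inr (by linarith))
    have hfm : AEStronglyMeasurable f (volume.restrict (Ioi 0)) := by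
      have h1 : AEStronglyMeasurable (fun y => ((‖v y‖ ^ (p-1) : ℝ) : ℂ))
          (volume.restrict (Ioi 0)) :=
        Complex.continuous_ofReal.comp_aestronglyMeasurable
          (hrc.comp_aestronglyMeasurable hvm.norm)
      exact h1.mul hvm
    have hdm : AEStronglyMeasurable (deriv f) (volume.restrict (Ioi 0)) :=
      (measurable_deriv f).aestronglyMeasurable.restrict
    have hxm : AEStronglyMeasurable (fun x : ℝ => (x:ℂ)) (volume.restrict (Ioi 0)) :=
      Complex.continuous_ofReal.aestronglyMeasurable.restrict
    have : AEStronglyMeasurable (Jop t f) (volume.restrict (Ioi 0)) :=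
      (hxm.mul hfm).add ((aestronglyMeasurable_const).mul hdm)
    exact (this.norm.pow 2).congr (Filter.Eventually.of_forall fun x => by norm_num)
  -- the general integral step
  have istep : ∀ M : ℝ, 0 ≤ M → (∀ x ∈ Ioi (0:ℝ), ‖v x‖^2 ≤ M) →
      L2norm (Jop t f) ≤ p * M ^ ((p-1)/2) * BJ := by
    intro M hM hsup
    have hmono : ∫ x in Ioi (0:ℝ), ‖Jop t f x‖^2 ≤
        ∫ x in Ioi (0:ℝ), p^2 * M ^ (p-1) * ‖Jop t v x‖^2 := by
      refine integral_mono_of_nonneg (Filter.Eventually.of_forall fun x => by positivity)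
        (hJ2.const_mul _) ?_
      refine (ae_restrict_iff' measurableSet_Ioi).2 (Filter.Eventually.of_forall fun x hx => ?_)
      have h1 := hpt x hx
      have h2 : ‖Jop t f x‖^2 ≤ (p * ‖v x‖ ^ (p-1) * ‖Jop t v x‖)^2 := by
        refine pow_le_pow_left₀ (norm_nonneg _) h1 2
      refine le_trans h2 ?_
      have h3 : (‖v x‖ ^ (p-1))^2 = (‖v x‖^2) ^ (p-1) := by
        rw [← Real.rpow_natCast (‖v x‖ ^ (p-1)) 2, ← Real.rpow_natCast (‖v x‖) 2,
          ← Real.rpow_mul (norm_nonneg _), ← Real.rpow_mul (norm_nonneg _)]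
        congr 1
        push_cast
        ring
      have h4 : (‖v x‖^2) ^ (p-1) ≤ M ^ (p-1) :=
        Real.rpow_le_rpow (by positivity) (hsup x hx) (by linarith)
      calc (p * ‖v x‖ ^ (p-1) * ‖Jop t v x‖)^2
          = p^2 * ((‖v x‖ ^ (p-1))^2) * ‖Jop t v x‖^2 := by ring
        _ = p^2 * ((‖v x‖^2) ^ (p-1)) * ‖Jop t v x‖^2 := by rw [h3]
        _ ≤ p^2 * M ^ (p-1) * ‖Jop t v x‖^2 := by
            have hj : (0:ℝ) ≤ ‖Jop t v x‖^2 := by positivity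
            exact mul_le_mul_of_nonneg_right (mul_le_mul_of_nonneg_left h4 (sq_nonneg p)) hj
    have hL : L2norm (Jop t f) ≤ Real.sqrt (p^2 * M ^ (p-1) * ∫ x in Ioi (0:ℝ), ‖Jop t v x‖^2) := by
      rw [L2norm]
      refine Real.sqrt_le_sqrt ?_
      rw [show (∫ x in Ioi (0:ℝ), p^2 * M^(p-1) * ‖Jop t v x‖^2)
          = p^2 * M^(p-1) * ∫ x in Ioi (0:ℝ), ‖Jop t v x‖^2 from integral_const_mul _ _] at hmono
      exact hmono
    refine le_trans hL ?_
    rw [Real.sqrt_mul (by positivity), Real.sqrt_mul (by positivity)]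
    have e1 : Real.sqrt (p^2) = p := by
      rw [Real.sqrt_sq (by linarith)]
    have e2 : Real.sqrt (M ^ (p-1)) = M ^ ((p-1)/2) := by
      rw [Real.sqrt_eq_rpow, ← Real.rpow_mul hM]
      congr 1
      ring
    rw [e1, e2, hBJ, L2norm]
  constructor
  · -- first estimate, via sup2
    have h := istep (2 * A * (BJ / t)) (by positivity) sup2
    rcases eq_or_lt_of_le hBJ0 with hBJz | hBJpos
    · -- BJ = 0
      have hz : (2 * A * (BJ / t)) ^ ((p-1)/2) * BJ = 0 := by rw [← hBJz]; ring
      have hL0 : L2norm (Jop t f) ≤ 0 := by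
        refine le_trans h ?_
        rw [mul_assoc, hz, mul_zero]
      have hp2 : (0:ℝ) < (p+1)/2 := by linarith
      rw [← hBJz, Real.zero_rpow (ne_of_gt hp2), mul_zero]
      exact hL0
    · refine le_trans h (le_of_eq ?_)
      have ht0 : (0:ℝ) ≤ t := le_of_lt ht
      have e3 : t ^ ((p-1)/2) ≠ 0 := by positivity
      have e4 : t ^ (-(p-1)/2) = (t ^ ((p-1)/2))⁻¹ := by
        rw [show (-(p-1)/2 : ℝ) = -((p-1)/2) by ring, Real.rpow_neg ht0]
      have e5 : BJ ^ ((p-1)/2) * BJ = BJ ^ ((p+1)/2) := by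
        nth_rewrite 2 [← Real.rpow_one BJ]
        rw [← Real.rpow_add hBJpos]
        congr 1
        ring
      rw [Real.mul_rpow (by positivity) (by positivity),
        Real.mul_rpow (by norm_num) hA0,
        Real.div_rpow hBJ0 ht0, e4, ← e5]
      field_simp
  · -- second estimate, via sup1
    have h := istep (2 * A * B1) (by positivity) sup1
    refine le_trans h (le_of_eq ?_)
    rw [Real.mul_rpow (by positivity) hB10, Real.mul_rpow (by norm_num) hA0]
    ring
end

section
/- Boundary trace of the boundary potential: let h ∈ C¹([0,∞)) be bounded with bounded derivative. Then for every t > 0 the improper integral defining z_D(t,x) converges for each x > 0 and lim_{x→0⁺} z_D(t,x) = h(t). (This uses the Fresnel integral lim_{R→∞} ∫₀^R e^{i y²/2} dy = (1/2)√(2π) e^{iπ/4}.) -/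
open MeasureTheory Set Filter

/-- The square root `(2πi)^{1/2} := √(2π) e^{iπ/4}`. -/
noncomputable def sqrtTwoPiI : ℂ :=
  (Real.sqrt (2 * Real.pi) : ℂ) * Complex.exp ((Real.pi / 4 : ℂ) * Complex.I)

noncomputable def fres (ε : ℝ) (y : ℝ) : ℂ := Complex.exp ((Complex.I - ε) * y ^ 2 / 2)

lemma fres_hasDerivAt (ε : ℝ) (y : ℝ) :
    HasDerivAt (fun y : ℝ => fres ε y) ((Complex.I - ε) * y * fres ε y) y := by
  have h1 : HasDerivAt (fun z : ℂ => Complex.exp ((Complex.I - ε) * z ^ 2 / 2))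
      (Complex.exp ((Complex.I - ε) * (y:ℂ) ^ 2 / 2) * ((Complex.I - ε) * y)) (y:ℂ) := by
    have h2 : HasDerivAt (fun z : ℂ => (Complex.I - ε) * z ^ 2 / 2)
        ((Complex.I - ε) * y) (y:ℂ) := by
      have := ((hasDerivAt_pow 2 (y:ℂ)).const_mul (Complex.I - (ε:ℂ))).div_const 2
      refine this.congr_deriv ?_
      norm_num
      ring
    exact h2.cexp
  have := h1.comp_ofReal
  simpa [fres, mul_comm] using this

lemma fres_norm (ε : ℝ) (y : ℝ) : ‖fres ε y‖ = Real.exp (-(ε * y ^ 2) / 2) := by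
  have hre : fres ε y = Complex.exp
      (Complex.ofReal (-(ε * y ^ 2) / 2) + ((y ^ 2 / 2 : ℝ) : ℂ) * Complex.I) := by
    rw [fres]; congr 1; push_cast; ring
  rw [hre, Complex.norm_exp]
  congr 1
  simp [← Complex.ofReal_pow]

lemma fres_norm_le (ε : ℝ) (hε : 0 ≤ ε) (y : ℝ) : ‖fres ε y‖ ≤ 1 := by
  rw [fres_norm]
  apply Real.exp_le_one_iff.mpr
  have : 0 ≤ ε * y ^ 2 := by positivity
  linarith

lemma one_le_norm_c (ε : ℝ) : 1 ≤ ‖Complex.I - (ε:ℂ)‖ := by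
  have := Complex.abs_im_le_norm (Complex.I - (ε:ℂ))
  simpa using this

lemma c_ne_zero (ε : ℝ) : Complex.I - (ε:ℂ) ≠ 0 := by
  intro h
  have : (Complex.I - (ε:ℂ)).im = 0 := by rw [h]; simp
  simp at this

/-- Key integration-by-parts bound. -/
lemma fres_ibp_bound (ε : ℝ) (hε : 0 ≤ ε) {R₁ R₂ : ℝ} (h1 : 0 < R₁) (h12 : R₁ ≤ R₂) :
    ‖∫ y in R₁..R₂, fres ε y‖ ≤ 3 / R₁ := by
  set c : ℂ := Complex.I - (ε:ℂ) with hc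
  have hcne := c_ne_zero ε
  have hcnorm := one_le_norm_c ε
  -- primitive
  set P : ℝ → ℂ := fun y => fres ε y / (c * y) with hP
  have hyne : ∀ y : ℝ, y ∈ Set.uIcc R₁ R₂ → (y:ℂ) ≠ 0 := by
    intro y hy
    have : R₁ ≤ y := by
      rcases Set.mem_uIcc.mp hy with h | h
      · linarith [h.1]
      · linarith [h.1]
    exact_mod_cast ne_of_gt (lt_of_lt_of_le h1 this)
  have hderiv : ∀ y ∈ Set.uIcc R₁ R₂,
      HasDerivAt P (fres ε y - fres ε y / (c * y ^ 2)) y := by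
    intro y hy
    have hy0 : (y:ℂ) ≠ 0 := hyne y hy
    have hcy : c * (y:ℂ) ≠ 0 := mul_ne_zero hcne hy0
    have hinner : HasDerivAt (fun s : ℝ => c * (s:ℂ)) c y := by
      simpa using (Complex.ofRealCLM.hasDerivAt (x := y)).const_mul c
    have hdiv := (fres_hasDerivAt ε y).div hinner hcy
    rw [hP]
    refine hdiv.congr_deriv ?_
    have hc0 : c ≠ 0 := hcne
    field_simp
    ring
  have hcont : ContinuousOn (fun y : ℝ => fres ε y - fres ε y / (c * (y:ℂ) ^ 2))
      (Set.uIcc R₁ R₂) := by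
    have hfc : Continuous fun y : ℝ => fres ε y :=
      Complex.continuous_exp.comp
        ((continuous_const.mul (Complex.continuous_ofReal.pow 2)).div_const 2)
    apply (hfc.continuousOn).sub
    apply hfc.continuousOn.div
    · exact (continuous_const.mul (Complex.continuous_ofReal.pow 2)).continuousOn
    · intro y hy
      exact mul_ne_zero hcne (pow_ne_zero 2 (hyne y hy))
  have hii : IntervalIntegrable (fun y : ℝ => fres ε y - fres ε y / (c * (y:ℂ) ^ 2))
      volume R₁ R₂ := hcont.intervalIntegrable
  have hfti := intervalIntegral.integral_eq_sub_of_hasDerivAt hderiv hii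
  -- split the integral
  have hfc : Continuous fun y : ℝ => fres ε y :=
    Complex.continuous_exp.comp
      ((continuous_const.mul (Complex.continuous_ofReal.pow 2)).div_const 2)
  have hii1 : IntervalIntegrable (fun y : ℝ => fres ε y) volume R₁ R₂ :=
    hfc.intervalIntegrable _ _
  have hii2 : IntervalIntegrable (fun y : ℝ => fres ε y / (c * (y:ℂ) ^ 2)) volume R₁ R₂ := by
    apply ContinuousOn.intervalIntegrable
    apply hfc.continuousOn.div
    · exact (continuous_const.mul (Complex.continuous_ofReal.pow 2)).continuousOn
    · intro y hy
      exact mul_ne_zero hcne (pow_ne_zero 2 (hyne y hy))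
  have hsplit : (∫ y in R₁..R₂, fres ε y) =
      P R₂ - P R₁ + ∫ y in R₁..R₂, fres ε y / (c * (y:ℂ) ^ 2) := by
    rw [← hfti, intervalIntegral.integral_sub hii1 hii2]
    ring
  rw [hsplit]
  have hPbound : ∀ y : ℝ, R₁ ≤ y → ‖P y‖ ≤ 1 / y := by
    intro y hy
    have hy0 : 0 < y := lt_of_lt_of_le h1 hy
    rw [hP]
    simp only [norm_div, norm_mul, Complex.norm_real, Real.norm_eq_abs, abs_of_pos hy0]
    apply div_le_div₀ (by norm_num) (fres_norm_le ε hε y) hy0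
    calc y = 1 * y := (one_mul y).symm
    _ ≤ ‖c‖ * y := by
        apply mul_le_mul_of_nonneg_right hcnorm hy0.le
  have hIbound : ‖∫ y in R₁..R₂, fres ε y / (c * (y:ℂ) ^ 2)‖ ≤ 1 / R₁ - 1 / R₂ := by
    have hptwise : ∀ᵐ t ∂(volume.restrict (Set.uIoc R₁ R₂)),
        ‖fres ε t / (c * (t:ℂ) ^ 2)‖ ≤ (t:ℝ) ^ (-2 : ℤ) := by
      apply ae_restrict_of_forall_mem measurableSet_uIoc
      intro t ht
      have ht1 : R₁ < t := by
        rcases Set.mem_uIoc.mp ht with h | h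
        · exact h.1
        · linarith [h.1, h.2]
      have ht0 : 0 < t := lt_trans h1 ht1
      have hnorm : ‖fres ε t / (c * (t:ℂ) ^ 2)‖ = ‖fres ε t‖ / (‖c‖ * t ^ 2) := by
        rw [norm_div, norm_mul, norm_pow, Complex.norm_real, Real.norm_eq_abs, abs_of_pos ht0]
      have h2 : (t:ℝ) ^ (-2 : ℤ) = 1 / t ^ 2 := by
        rw [zpow_neg, one_div, show ((2:ℤ)) = ((2:ℕ):ℤ) by norm_num, zpow_natCast]
      rw [hnorm, h2]
      apply div_le_div₀ (by norm_num) (fres_norm_le ε hε t) (by positivity)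
      nth_rewrite 1 [← one_mul (t ^ 2)]
      exact mul_le_mul_of_nonneg_right hcnorm (by positivity)
    have hgii : IntervalIntegrable (fun t : ℝ => (t:ℝ) ^ (-2 : ℤ)) volume R₁ R₂ := by
      apply ContinuousOn.intervalIntegrable
      apply ContinuousOn.zpow₀ continuousOn_id
      intro t ht
      left
      have : R₁ ≤ t := by
        rcases Set.mem_uIcc.mp ht with h | h
        · linarith [h.1]
        · linarith [h.1]
      exact ne_of_gt (lt_of_lt_of_le h1 this)
    have := intervalIntegral.norm_integral_le_abs_of_norm_le hptwise hgii
    have hnotmem : (0:ℝ) ∉ Set.uIcc R₁ R₂ := by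
      intro hmem
      rcases Set.mem_uIcc.mp hmem with h | h
      · linarith [h.1]
      · linarith [h.1, h12]
    have hval : (∫ t in R₁..R₂, (t:ℝ) ^ (-2 : ℤ)) = 1 / R₁ - 1 / R₂ := by
      rw [integral_zpow (Or.inr ⟨by norm_num, hnotmem⟩)]
      have e : (-2 : ℤ) + 1 = -1 := by norm_num
      rw [e]
      simp only [zpow_neg, zpow_one]
      push_cast
      have hR1 : R₁ ≠ 0 := ne_of_gt h1
      have hR2 : R₂ ≠ 0 := ne_of_gt (lt_of_lt_of_le h1 h12)
      field_simp
      ring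
    rw [hval] at this
    refine this.trans ?_
    rw [_root_.abs_of_nonneg]
    have hR2 : 0 < R₂ := lt_of_lt_of_le h1 h12
    have : 1 / R₂ ≤ 1 / R₁ := one_div_le_one_div_of_le h1 h12
    linarith
  have hR2 : 0 < R₂ := lt_of_lt_of_le h1 h12
  have h2le : 1 / R₂ ≤ 1 / R₁ := one_div_le_one_div_of_le h1 h12
  calc ‖P R₂ - P R₁ + ∫ y in R₁..R₂, fres ε y / (c * (y:ℂ) ^ 2)‖
      ≤ ‖P R₂ - P R₁‖ + ‖∫ y in R₁..R₂, fres ε y / (c * (y:ℂ) ^ 2)‖ := norm_add_le _ _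
    _ ≤ (‖P R₂‖ + ‖P R₁‖) + (1 / R₁ - 1 / R₂) := by
        gcongr
        exact norm_sub_le _ _
    _ ≤ (1 / R₂ + 1 / R₁) + (1 / R₁ - 1 / R₂) := by
        gcongr
        · exact hPbound R₂ h12
        · exact hPbound R₁ le_rfl
    _ = 2 / R₁ := by ring
    _ ≤ 3 / R₁ := by gcongr; norm_num

lemma bre (ε : ℝ) : (((ε:ℂ) - Complex.I) / 2).re = ε / 2 := by
  simp [Complex.div_re, Complex.sub_re, Complex.sub_im, Complex.normSq]

lemma fres_eq (ε : ℝ) (y : ℝ) :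
    fres ε y = Complex.exp (-(((ε:ℂ) - Complex.I) / 2) * (y:ℂ) ^ 2) := by
  rw [fres]; congr 1; ring

lemma fres_integrable {ε : ℝ} (hε : 0 < ε) : Integrable (fun y : ℝ => fres ε y) := by
  have hb : 0 < (((ε:ℂ) - Complex.I) / 2).re := by rw [bre]; positivity
  have := integrable_cexp_neg_mul_sq hb
  apply this.congr
  filter_upwards with y
  rw [fres_eq]

lemma J_val {ε : ℝ} (hε : 0 < ε) :
    ∫ y in Set.Ioi (0:ℝ), fres ε y
      = ((Real.pi : ℂ) / ((((ε:ℂ) - Complex.I)) / 2)) ^ (1/2 : ℂ) / 2 := by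
  have hb : 0 < (((ε:ℂ) - Complex.I) / 2).re := by rw [bre]; positivity
  rw [setIntegral_congr_fun measurableSet_Ioi (fun y _ => fres_eq ε y)]
  exact integral_gaussian_complex_Ioi hb

lemma fres_tail_bound {ε R : ℝ} (hε : 0 < ε) (hR : 0 < R) :
    ‖∫ y in Set.Ioi R, fres ε y‖ ≤ 3 / R := by
  have hTend := intervalIntegral_tendsto_integral_Ioi R
    ((fres_integrable hε).integrableOn) tendsto_id
  apply le_of_tendsto hTend.norm
  filter_upwards [eventually_ge_atTop R] with R' hR'
  exact fres_ibp_bound ε hε.le hR hR'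

lemma fres_split {ε R : ℝ} (hε : 0 < ε) (hR : 0 ≤ R) :
    ∫ y in Set.Ioi (0:ℝ), fres ε y
      = (∫ y in (0:ℝ)..R, fres ε y) + ∫ y in Set.Ioi R, fres ε y := by
  rw [intervalIntegral.integral_of_le hR]
  rw [← MeasureTheory.setIntegral_union (Set.Ioc_disjoint_Ioi le_rfl) measurableSet_Ioi
    ((fres_integrable hε).integrableOn) ((fres_integrable hε).integrableOn)]
  rw [Set.Ioc_union_Ioi_eq_Ioi hR]

lemma fres_diff_bound (ε : ℝ) (hε : 0 ≤ ε) (y : ℝ) :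
    ‖fres 0 y - fres ε y‖ ≤ ε * y ^ 2 / 2 := by
  have key : fres ε y = fres 0 y * Complex.exp (((-(ε * y ^ 2) / 2 : ℝ)) : ℂ) := by
    rw [fres, fres, ← Complex.exp_add]; congr 1; push_cast; ring
  rw [key, ← mul_one_sub, norm_mul]
  have h1 : ‖fres 0 y‖ ≤ 1 := fres_norm_le 0 le_rfl y
  have h2 : ‖(1 : ℂ) - Complex.exp (((-(ε * y ^ 2) / 2 : ℝ)) : ℂ)‖ ≤ ε * y ^ 2 / 2 := by
    rw [← Complex.ofReal_exp, ← Complex.ofReal_one, ← Complex.ofReal_sub, Complex.norm_real,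
      Real.norm_eq_abs]
    have hu0 : 0 ≤ ε * y ^ 2 / 2 := by positivity
    have hle : Real.exp (-(ε * y ^ 2) / 2) ≤ 1 := Real.exp_le_one_iff.mpr (by linarith)
    have hge : 1 - ε * y ^ 2 / 2 ≤ Real.exp (-(ε * y ^ 2) / 2) := by
      have := Real.add_one_le_exp (-(ε * y ^ 2) / 2)
      linarith
    rw [_root_.abs_of_nonneg (by linarith)]
    linarith
  calc ‖fres 0 y‖ * ‖(1:ℂ) - Complex.exp (((-(ε * y ^ 2) / 2 : ℝ)) : ℂ)‖
      ≤ 1 * (ε * y ^ 2 / 2) := mul_le_mul h1 h2 (norm_nonneg _) one_pos.le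
    _ = ε * y ^ 2 / 2 := one_mul _

lemma fres_compare {ε R : ℝ} (hε : 0 < ε) (hR : 0 < R) :
    ‖(∫ y in (0:ℝ)..R, fres 0 y) - ∫ y in Set.Ioi (0:ℝ), fres ε y‖
      ≤ ε * R ^ 3 / 2 + 3 / R := by
  have hfc : ∀ δ : ℝ, Continuous fun y : ℝ => fres δ y := fun δ =>
    Complex.continuous_exp.comp
      ((continuous_const.mul (Complex.continuous_ofReal.pow 2)).div_const 2)
  rw [fres_split hε hR.le]
  have heq : (∫ y in (0:ℝ)..R, fres 0 y)
      - ((∫ y in (0:ℝ)..R, fres ε y) + ∫ y in Set.Ioi R, fres ε y)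
      = (∫ y in (0:ℝ)..R, (fres 0 y - fres ε y)) - ∫ y in Set.Ioi R, fres ε y := by
    rw [intervalIntegral.integral_sub ((hfc 0).intervalIntegrable _ _)
      ((hfc ε).intervalIntegrable _ _)]
    ring
  rw [heq]
  refine (norm_sub_le _ _).trans ?_
  have h1 : ‖∫ y in (0:ℝ)..R, (fres 0 y - fres ε y)‖ ≤ ε * R ^ 2 / 2 * |R - 0| := by
    apply intervalIntegral.norm_integral_le_of_norm_le_const
    intro x hx
    have hx' : |x| ≤ R := by
      rw [Set.uIoc_of_le hR.le] at hx
      rw [abs_of_pos hx.1]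
      exact hx.2
    refine (fres_diff_bound ε hε.le x).trans ?_
    have : x ^ 2 ≤ R ^ 2 := by
      rw [← _root_.sq_abs x]
      exact pow_le_pow_left₀ (abs_nonneg x) hx' 2
    nlinarith
  have h2 := fres_tail_bound hε hR
  have : ε * R ^ 2 / 2 * |R - 0| = ε * R ^ 3 / 2 := by
    rw [sub_zero, abs_of_pos hR]; ring
  linarith [h1, h2, this ▸ h1]

lemma two_pi_I_cpow_half :
    ((2 * Real.pi * Complex.I : ℂ)) ^ (1/2 : ℂ) = sqrtTwoPiI := by
  have hne : (2 * Real.pi * Complex.I : ℂ) ≠ 0 := by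
    simp [Real.pi_ne_zero, Complex.I_ne_zero]
  rw [Complex.cpow_def_of_ne_zero hne]
  have habs : ‖(2 * Real.pi * Complex.I : ℂ)‖ = 2 * Real.pi := by
    rw [norm_mul, norm_mul, Complex.norm_I, Complex.norm_two, Complex.norm_real, Real.norm_eq_abs,
      abs_of_pos Real.pi_pos, mul_one]
  have harg : Complex.arg (2 * Real.pi * Complex.I) = Real.pi / 2 := by
    rw [Complex.arg_eq_pi_div_two_iff]
    constructor
    · simp
    · simp [Real.pi_pos]
  have hlog : Complex.log (2 * Real.pi * Complex.I)
      = (Real.log (2 * Real.pi) : ℂ) + (Real.pi / 2 : ℝ) * Complex.I := by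
    apply Complex.ext
    · rw [Complex.log_re, habs]
      simp
    · rw [Complex.log_im, harg]
      simp
  rw [hlog]
  have hsplit : ((Real.log (2 * Real.pi) : ℂ) + (Real.pi / 2 : ℝ) * Complex.I) * (1/2 : ℂ)
      = ((Real.log (2 * Real.pi) / 2 : ℝ) : ℂ) + ((Real.pi / 4 : ℝ) : ℂ) * Complex.I := by
    push_cast; ring
  rw [hsplit, Complex.exp_add, ← Complex.ofReal_exp]
  have hsqrt : Real.exp (Real.log (2 * Real.pi) / 2) = Real.sqrt (2 * Real.pi) := by
    rw [Real.sqrt_eq_rpow, Real.rpow_def_of_pos (by positivity)]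
    congr 1
    ring
  rw [hsqrt, sqrtTwoPiI]
  push_cast
  ring

lemma J_tendsto :
    Tendsto (fun ε : ℝ => ∫ y in Set.Ioi (0:ℝ), fres ε y) (nhdsWithin 0 (Set.Ioi 0))
      (nhds (sqrtTwoPiI / 2)) := by
  have hwne : ((((0:ℝ):ℂ)) - Complex.I) / 2 ≠ 0 := by
    rw [div_ne_zero_iff]
    refine ⟨?_, two_ne_zero⟩
    simp [Complex.ext_iff]
  have hval : (Real.pi : ℂ) / (((((0:ℝ):ℂ)) - Complex.I) / 2) = 2 * Real.pi * Complex.I := by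
    rw [div_eq_iff hwne]
    simp only [Complex.ofReal_zero, zero_sub]
    linear_combination (Real.pi : ℂ) * Complex.I_sq
  have hinner : ContinuousAt (fun ε : ℝ => (Real.pi : ℂ) / ((((ε:ℂ)) - Complex.I) / 2)) 0 := by
    apply ContinuousAt.div continuousAt_const
    · exact ((Complex.continuous_ofReal.continuousAt).sub continuousAt_const).div_const 2
    · exact hwne
  have hcomp : ContinuousAt
      (fun ε : ℝ => ((Real.pi : ℂ) / ((((ε:ℂ)) - Complex.I) / 2)) ^ (1/2 : ℂ)) 0 := by
    apply hinner.cpow continuousAt_const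
    rw [hval, Complex.mem_slitPlane_iff]
    right
    simp [Real.pi_ne_zero]
  have hform := (hcomp.div_const 2).tendsto
  rw [hval, two_pi_I_cpow_half] at hform
  apply Tendsto.congr' _ (hform.mono_left nhdsWithin_le_nhds)
  filter_upwards [self_mem_nhdsWithin] with ε (hε : ε ∈ Set.Ioi (0:ℝ))
  exact (J_val hε).symm

theorem fres0_tendsto :
    Tendsto (fun R : ℝ => ∫ y in (0:ℝ)..R, fres 0 y) atTop (nhds (sqrtTwoPiI / 2)) := by
  set L := sqrtTwoPiI / 2 with hL
  have hbound : ∀ R : ℝ, 0 < R → ‖(∫ y in (0:ℝ)..R, fres 0 y) - L‖ ≤ 3 / R := by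
    intro R hR
    have hlim : Tendsto (fun ε : ℝ => ε * R ^ 3 / 2 + 3 / R
        + ‖(∫ y in Set.Ioi (0:ℝ), fres ε y) - L‖) (nhdsWithin 0 (Set.Ioi 0))
        (nhds (3 / R)) := by
      have h1 : Tendsto (fun ε : ℝ => ε * R ^ 3 / 2) (nhds 0) (nhds 0) := by
        have hc : Continuous (fun ε : ℝ => ε * R ^ 3 / 2) := by continuity
        simpa using hc.tendsto 0
      have h2 : Tendsto (fun ε : ℝ => ‖(∫ y in Set.Ioi (0:ℝ), fres ε y) - L‖)
          (nhdsWithin 0 (Set.Ioi 0)) (nhds 0) := by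
        have := (J_tendsto.sub_const L).norm
        simpa [hL] using this
      have := ((h1.mono_left nhdsWithin_le_nhds).add
        (tendsto_const_nhds : Tendsto (fun _ : ℝ => 3 / R)
          (nhdsWithin (0:ℝ) (Set.Ioi 0)) (nhds (3 / R)))).add h2
      simpa using this
    apply ge_of_tendsto hlim
    filter_upwards [self_mem_nhdsWithin] with ε (hε : ε ∈ Set.Ioi (0:ℝ))
    calc ‖(∫ y in (0:ℝ)..R, fres 0 y) - L‖
        ≤ ‖(∫ y in (0:ℝ)..R, fres 0 y) - ∫ y in Set.Ioi (0:ℝ), fres ε y‖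
          + ‖(∫ y in Set.Ioi (0:ℝ), fres ε y) - L‖ := by
          have := norm_sub_le_norm_sub_add_norm_sub (∫ y in (0:ℝ)..R, fres 0 y)
            (∫ y in Set.Ioi (0:ℝ), fres ε y) L
          exact this
      _ ≤ ε * R ^ 3 / 2 + 3 / R + ‖(∫ y in Set.Ioi (0:ℝ), fres ε y) - L‖ := by
          have := fres_compare hε hR
          linarith
  have hzero : Tendsto (fun R : ℝ => (∫ y in (0:ℝ)..R, fres 0 y) - L) atTop (nhds 0) := by
    have h3R : Tendsto (fun R : ℝ => 3 / R) atTop (nhds 0) :=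
      tendsto_const_nhds.div_atTop tendsto_id
    apply squeeze_zero_norm' _ h3R
    filter_upwards [eventually_gt_atTop 0] with R hR
    exact hbound R hR
  have := hzero.add_const L
  simpa using this

lemma lipOnPos {h : ℝ → ℂ} (hreg : ContDiffOn ℝ 1 h (Set.Ici 0)) {M : ℝ}
    (hM : ∀ t : ℝ, 0 ≤ t → ‖deriv h t‖ ≤ M) {s u : ℝ} (hs : 0 < s) (hu : 0 < u) :
    ‖h u - h s‖ ≤ M * |u - s| := by
  have hd : ∀ x ∈ Set.Ioi (0:ℝ), HasDerivWithinAt h (deriv h x) (Set.Ioi 0) x := by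
    intro x hx
    have hxI : Set.Ici (0:ℝ) ∈ nhds x := Ici_mem_nhds hx
    have hdiff : DifferentiableAt ℝ h x :=
      ((hreg.differentiableOn one_ne_zero) x (Set.mem_Ici.mpr (le_of_lt hx))).differentiableAt hxI
    exact hdiff.hasDerivAt.hasDerivWithinAt
  have := (convex_Ioi (0:ℝ)).norm_image_sub_le_of_norm_hasDerivWithin_le hd
    (fun x hx => hM x (le_of_lt hx)) hs hu
  simpa [Real.norm_eq_abs] using this

lemma sqrtTwoPiI_ne_zero : sqrtTwoPiI ≠ 0 := by
  rw [sqrtTwoPiI]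
  apply mul_ne_zero
  · simp only [ne_eq, Complex.ofReal_eq_zero]
    positivity
  · exact Complex.exp_ne_zero _

lemma f0_eq_fres0 (y : ℝ) : Complex.exp (Complex.I * (y:ℂ) ^ 2 / 2) = fres 0 y := by
  rw [fres]; congr 1; push_cast; ring


/-- `z` is the boundary potential built from `h`:
`z(t,x) = 2 (2πi)^{-1/2} lim_{R→∞} ∫_{x/√t}^R e^{i y²/2} h(t - x²/y²) dy`
(the improper-integral form of `(2πi)^{-1/2} ∫₀ᵗ e^{i x²/(2τ)} x τ^{-3/2} h(t-τ) dτ`). -/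
def IsBoundaryPotential (h : ℝ → ℂ) (z : ℝ → ℝ → ℂ) : Prop :=
  ∀ t x : ℝ, 0 < t → 0 < x →
    Filter.Tendsto
      (fun R : ℝ => (2 : ℂ) * sqrtTwoPiI⁻¹ *
        ∫ y in (x / Real.sqrt t)..R,
          Complex.exp (Complex.I * (y : ℂ) ^ 2 / 2) * h (t - x ^ 2 / y ^ 2))
      Filter.atTop (nhds (z t x))

/-- Boundary trace of the boundary potential: the improper integral defining
`z_D(t,x)` converges for every `t > 0`, `x > 0`, and `z_D(t,x) → h(t)` as
`x → 0⁺`. -/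
theorem boundary_potential_trace
    (h : ℝ → ℂ) (hreg : ContDiffOn ℝ 1 h (Set.Ici 0))
    (hbdd : ∃ M : ℝ, ∀ t : ℝ, 0 ≤ t → ‖h t‖ ≤ M ∧ ‖deriv h t‖ ≤ M) :
    ∃ z : ℝ → ℝ → ℂ, IsBoundaryPotential h z ∧
      ∀ t : ℝ, 0 < t →
        Filter.Tendsto (fun x => z t x) (nhdsWithin 0 (Set.Ioi 0)) (nhds (h t)) := by
  obtain ⟨M, hM⟩ := hbdd
  have hM0 : 0 ≤ M := le_trans (norm_nonneg _) (hM 0 le_rfl).1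
  have hcont : ContinuousOn h (Set.Ici 0) := hreg.continuousOn
  have hlip : ∀ {s u : ℝ}, 0 < s → 0 < u → ‖h u - h s‖ ≤ M * |u - s| :=
    fun hs hu => lipOnPos hreg (fun t ht => (hM t ht).2) hs hu
  set f0 : ℝ → ℂ := fun y => Complex.exp (Complex.I * (y:ℂ) ^ 2 / 2) with hf0def
  have hf0c : Continuous f0 := by
    have : Continuous fun y : ℝ => fres 0 y :=
      Complex.continuous_exp.comp
        ((continuous_const.mul (Complex.continuous_ofReal.pow 2)).div_const 2)
    exact this.congr fun y => (f0_eq_fres0 y).symm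
  have hf0norm : ∀ y : ℝ, ‖f0 y‖ ≤ 1 := by
    intro y
    show ‖Complex.exp (Complex.I * (y:ℂ) ^ 2 / 2)‖ ≤ 1
    rw [f0_eq_fres0 y]
    exact fres_norm_le 0 le_rfl y
  have hf0tendsto : Tendsto (fun R : ℝ => ∫ y in (0:ℝ)..R, f0 y) atTop
      (nhds (sqrtTwoPiI / 2)) := by
    refine fres0_tendsto.congr fun R => ?_
    exact intervalIntegral.integral_congr fun y _ => (f0_eq_fres0 y).symm
  -- the boundary potential
  refine ⟨fun t x => 2 * sqrtTwoPiI⁻¹ *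
    (h t * (sqrtTwoPiI / 2 - ∫ y in (0:ℝ)..(x / Real.sqrt t), f0 y)
      + ∫ y in Set.Ioi (x / Real.sqrt t), f0 y * (h (t - x ^ 2 / y ^ 2) - h t)), ?_, ?_⟩
  · -- convergence of the improper integral
    intro t x ht hx
    set a : ℝ := x / Real.sqrt t with ha_def
    have ha : 0 < a := div_pos hx (Real.sqrt_pos.mpr ht)
    set φ : ℝ → ℂ := fun y => f0 y * (h (t - x ^ 2 / y ^ 2) - h t) with hφdef
    -- continuity of the inner map
    have hmaps : ∀ y : ℝ, a ≤ y → (0:ℝ) ≤ t - x ^ 2 / y ^ 2 := by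
      intro y hy
      have hy0 : 0 < y := lt_of_lt_of_le ha hy
      have hxa : x ^ 2 / y ^ 2 ≤ x ^ 2 / a ^ 2 := by
        apply div_le_div_of_nonneg_left (by positivity) (by positivity)
        exact pow_le_pow_left₀ ha.le hy 2
      have hat : x ^ 2 / a ^ 2 = t := by
        rw [ha_def, div_pow, Real.sq_sqrt ht.le]
        field_simp
      linarith
    have hinnercont : ContinuousOn (fun y : ℝ => h (t - x ^ 2 / y ^ 2)) (Set.Ici a) := by
      apply hcont.comp
      · apply ContinuousOn.sub continuousOn_const
        apply ContinuousOn.div continuousOn_const (continuousOn_pow 2)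
        intro y hy
        have : 0 < y := lt_of_lt_of_le ha hy
        positivity
      · intro y hy
        exact hmaps y hy
    have hφcont : ContinuousOn φ (Set.Ici a) :=
      (hf0c.continuousOn).mul (hinnercont.sub continuousOn_const)
    -- domination and integrability on Ioi a
    have hφbound : ∀ y ∈ Set.Ioi a, ‖φ y‖ ≤ M * x ^ 2 * y ^ (-2 : ℝ) := by
      intro y hy
      have hy' : a < y := hy
      have hy0 : 0 < y := lt_trans ha hy'
      have hs0 : 0 < t - x ^ 2 / y ^ 2 := by
        have hxa : x ^ 2 / y ^ 2 < x ^ 2 / a ^ 2 := by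
          have hyy : a ^ 2 < y ^ 2 := by nlinarith
          exact div_lt_div_of_pos_left (by positivity) (by positivity) hyy
        have hat : x ^ 2 / a ^ 2 = t := by
          rw [ha_def, div_pow, Real.sq_sqrt ht.le]
          field_simp
        linarith
      rw [hφdef, norm_mul]
      have h1 := hf0norm y
      have h2 : ‖h (t - x ^ 2 / y ^ 2) - h t‖ ≤ M * (x ^ 2 / y ^ 2) := by
        have := hlip ht hs0
        have habs : |t - x ^ 2 / y ^ 2 - t| = x ^ 2 / y ^ 2 := by
          rw [show t - x ^ 2 / y ^ 2 - t = -(x ^ 2 / y ^ 2) by ring, _root_.abs_neg,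
            _root_.abs_of_nonneg (by positivity)]
        rw [habs] at this
        exact this
      have h3 : y ^ (-2 : ℝ) = (y ^ 2)⁻¹ := by
        rw [Real.rpow_neg hy0.le, show ((2:ℝ)) = ((2:ℕ):ℝ) by norm_num, Real.rpow_natCast]
      calc ‖f0 y‖ * ‖h (t - x ^ 2 / y ^ 2) - h t‖ ≤ 1 * (M * (x ^ 2 / y ^ 2)) :=
            mul_le_mul h1 h2 (norm_nonneg _) one_pos.le
        _ = M * x ^ 2 * y ^ (-2 : ℝ) := by rw [h3]; ring
    have hgint : IntegrableOn (fun y : ℝ => M * x ^ 2 * y ^ (-2 : ℝ)) (Set.Ioi a) := by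
      exact ((integrableOn_Ioi_rpow_of_lt (by norm_num) ha).const_mul (M * x ^ 2))
    have hφmeas : AEStronglyMeasurable φ (volume.restrict (Set.Ioi a)) := by
      apply ContinuousOn.aestronglyMeasurable (hφcont.mono Set.Ioi_subset_Ici_self)
        measurableSet_Ioi
    have hφint : IntegrableOn φ (Set.Ioi a) := by
      apply Integrable.mono' hgint hφmeas
      filter_upwards [ae_restrict_mem measurableSet_Ioi] with y hy
      exact hφbound y hy
    -- convergence
    have hT2 : Tendsto (fun R : ℝ => ∫ y in a..R, φ y) atTop
        (nhds (∫ y in Set.Ioi a, φ y)) :=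
      intervalIntegral_tendsto_integral_Ioi a hφint tendsto_id
    have hT1 : Tendsto (fun R : ℝ => h t * ((∫ y in (0:ℝ)..R, f0 y)
        - ∫ y in (0:ℝ)..a, f0 y)) atTop
        (nhds (h t * (sqrtTwoPiI / 2 - ∫ y in (0:ℝ)..a, f0 y))) :=
      ((hf0tendsto.sub tendsto_const_nhds).const_mul (h t))
    have hsum := hT1.add hT2
    have hcongr : ∀ᶠ R : ℝ in atTop,
        h t * ((∫ y in (0:ℝ)..R, f0 y) - ∫ y in (0:ℝ)..a, f0 y) + (∫ y in a..R, φ y)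
          = ∫ y in a..R, f0 y * h (t - x ^ 2 / y ^ 2) := by
      filter_upwards [eventually_ge_atTop a] with R hR
      have hiif0 : ∀ u v : ℝ, IntervalIntegrable f0 volume u v :=
        fun u v => hf0c.intervalIntegrable u v
      have hadj : (∫ y in (0:ℝ)..a, f0 y) + (∫ y in a..R, f0 y) = ∫ y in (0:ℝ)..R, f0 y :=
        intervalIntegral.integral_add_adjacent_intervals (hiif0 0 a) (hiif0 a R)
      have hiiφ : IntervalIntegrable φ volume a R := by
        apply ContinuousOn.intervalIntegrable
        apply hφcont.mono
        rw [Set.uIcc_of_le hR]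
        exact fun y hy => hy.1
      have hii2 : IntervalIntegrable (fun y : ℝ => f0 y * h (t - x ^ 2 / y ^ 2)) volume a R := by
        apply ContinuousOn.intervalIntegrable
        apply ContinuousOn.mul (hf0c.continuousOn)
        apply hinnercont.mono
        rw [Set.uIcc_of_le hR]
        exact fun y hy => hy.1
      have hsplit2 : ∫ y in a..R, φ y
          = (∫ y in a..R, f0 y * h (t - x ^ 2 / y ^ 2)) - ∫ y in a..R, f0 y * h t := by
        rw [← intervalIntegral.integral_sub hii2 ((hiif0 a R).mul_const (h t))]
        apply intervalIntegral.integral_congr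
        intro y _
        rw [hφdef]
        ring
      have hconst : (∫ y in a..R, f0 y * h t) = (∫ y in a..R, f0 y) * h t := by
        rw [← intervalIntegral.integral_mul_const]
      rw [hsplit2, hconst, ← hadj]
      ring
    have := hsum.congr' hcongr
    exact (this.const_mul (2 * sqrtTwoPiI⁻¹)).congr (fun R => rfl)
  · -- boundary trace
    intro t ht
    have hst : 0 < Real.sqrt t := Real.sqrt_pos.mpr ht
    have hcx : Tendsto (fun x : ℝ => ∫ y in (0:ℝ)..(x / Real.sqrt t), f0 y)
        (nhdsWithin 0 (Set.Ioi 0)) (nhds 0) := by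
      apply squeeze_zero_norm' (a := fun x : ℝ => |x| / Real.sqrt t)
      · filter_upwards with x
        have hb := intervalIntegral.norm_integral_le_of_norm_le_const
          (C := 1) (f := f0) (a := (0:ℝ)) (b := x / Real.sqrt t) (fun y _ => hf0norm y)
        calc ‖∫ y in (0:ℝ)..(x / Real.sqrt t), f0 y‖ ≤ 1 * |x / Real.sqrt t - 0| := hb
          _ = |x| / Real.sqrt t := by
              rw [one_mul, sub_zero, abs_div, _root_.abs_of_pos hst]
      · have hcont2 : Continuous fun x : ℝ => |x| / Real.sqrt t :=
          (continuous_abs.div_const _)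
        have := hcont2.tendsto 0
        simp only [abs_zero, zero_div] at this
        exact this.mono_left nhdsWithin_le_nhds
    have hEx : Tendsto (fun x : ℝ => ∫ y in Set.Ioi (x / Real.sqrt t),
        f0 y * (h (t - x ^ 2 / y ^ 2) - h t)) (nhdsWithin 0 (Set.Ioi 0)) (nhds 0) := by
      apply squeeze_zero_norm' (a := fun x : ℝ => M * Real.sqrt t * x)
      · filter_upwards [self_mem_nhdsWithin] with x (hx : x ∈ Set.Ioi (0:ℝ))
        have hx0 : (0:ℝ) < x := hx
        set a : ℝ := x / Real.sqrt t with ha_def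
        have ha : 0 < a := div_pos hx0 hst
        set φ : ℝ → ℂ := fun y => f0 y * (h (t - x ^ 2 / y ^ 2) - h t) with hφdef
        have hat : x ^ 2 / a ^ 2 = t := by
          rw [ha_def, div_pow, Real.sq_sqrt ht.le]
          field_simp
        have hφbound : ∀ y ∈ Set.Ioi a, ‖φ y‖ ≤ M * x ^ 2 * y ^ (-2 : ℝ) := by
          intro y hy
          have hy' : a < y := hy
          have hy0 : 0 < y := lt_trans ha hy'
          have hs0 : 0 < t - x ^ 2 / y ^ 2 := by
            have hxa : x ^ 2 / y ^ 2 < x ^ 2 / a ^ 2 := by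
              have hyy : a ^ 2 < y ^ 2 := by nlinarith
              exact div_lt_div_of_pos_left (by positivity) (by positivity) hyy
            linarith
          rw [hφdef, norm_mul]
          have h1 := hf0norm y
          have h2 : ‖h (t - x ^ 2 / y ^ 2) - h t‖ ≤ M * (x ^ 2 / y ^ 2) := by
            have hl := hlip ht hs0
            have habs : |t - x ^ 2 / y ^ 2 - t| = x ^ 2 / y ^ 2 := by
              rw [show t - x ^ 2 / y ^ 2 - t = -(x ^ 2 / y ^ 2) by ring, _root_.abs_neg,
                _root_.abs_of_nonneg (by positivity)]
            rw [habs] at hl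
            exact hl
          have h3 : y ^ (-2 : ℝ) = (y ^ 2)⁻¹ := by
            rw [Real.rpow_neg hy0.le, show ((2:ℝ)) = ((2:ℕ):ℝ) by norm_num, Real.rpow_natCast]
          calc ‖f0 y‖ * ‖h (t - x ^ 2 / y ^ 2) - h t‖ ≤ 1 * (M * (x ^ 2 / y ^ 2)) :=
                mul_le_mul h1 h2 (norm_nonneg _) one_pos.le
            _ = M * x ^ 2 * y ^ (-2 : ℝ) := by rw [h3]; ring
        have hgint : IntegrableOn (fun y : ℝ => M * x ^ 2 * y ^ (-2 : ℝ)) (Set.Ioi a) :=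
          ((integrableOn_Ioi_rpow_of_lt (by norm_num) ha).const_mul (M * x ^ 2))
        have hmaps : ∀ y : ℝ, a ≤ y → (0:ℝ) ≤ t - x ^ 2 / y ^ 2 := by
          intro y hy
          have hy0 : 0 < y := lt_of_lt_of_le ha hy
          have hxa : x ^ 2 / y ^ 2 ≤ x ^ 2 / a ^ 2 := by
            apply div_le_div_of_nonneg_left (by positivity) (by positivity)
            exact pow_le_pow_left₀ ha.le hy 2
          linarith
        have hinnercont : ContinuousOn (fun y : ℝ => h (t - x ^ 2 / y ^ 2)) (Set.Ici a) := by
          apply hcont.comp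
          · apply ContinuousOn.sub continuousOn_const
            apply ContinuousOn.div continuousOn_const (continuousOn_pow 2)
            intro y hy
            have : 0 < y := lt_of_lt_of_le ha hy
            positivity
          · intro y hy
            exact hmaps y hy
        have hφcont : ContinuousOn φ (Set.Ici a) :=
          (hf0c.continuousOn).mul (hinnercont.sub continuousOn_const)
        have hφmeas : AEStronglyMeasurable φ (volume.restrict (Set.Ioi a)) :=
          ContinuousOn.aestronglyMeasurable (hφcont.mono Set.Ioi_subset_Ici_self)
            measurableSet_Ioi
        have hbnd : ‖∫ y in Set.Ioi a, φ y‖ ≤ ∫ y in Set.Ioi a, M * x ^ 2 * y ^ (-2 : ℝ) := by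
          apply MeasureTheory.norm_integral_le_of_norm_le hgint
          filter_upwards [ae_restrict_mem measurableSet_Ioi] with y hy
          exact hφbound y hy
        refine hbnd.trans ?_
        have hint : (∫ y in Set.Ioi a, M * x ^ 2 * y ^ (-2 : ℝ)) = M * x ^ 2 * a⁻¹ := by
          rw [MeasureTheory.integral_const_mul, integral_Ioi_rpow_of_lt (by norm_num) ha,
            show ((-2:ℝ) + 1) = -1 by norm_num, Real.rpow_neg_one]
          ring
        rw [hint, ha_def]
        rw [show (x / Real.sqrt t)⁻¹ = Real.sqrt t / x by rw [inv_div]]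
        rw [show M * x ^ 2 * (Real.sqrt t / x) = M * Real.sqrt t * x * (x / x) by ring,
          div_self (ne_of_gt hx0), mul_one]
      · have hcont2 : Continuous fun x : ℝ => M * Real.sqrt t * x :=
          (continuous_const.mul continuous_id)
        have := hcont2.tendsto 0
        simp only [mul_zero] at this
        exact this.mono_left nhdsWithin_le_nhds
    have hval : 2 * sqrtTwoPiI⁻¹ * (h t * (sqrtTwoPiI / 2 - 0) + 0) = h t := by
      have hne := sqrtTwoPiI_ne_zero
      field_simp
      ring
    have hLc : Tendsto (fun _ : ℝ => sqrtTwoPiI / 2) (nhdsWithin (0:ℝ) (Set.Ioi 0))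
        (nhds (sqrtTwoPiI / 2)) := tendsto_const_nhds
    have hfinal := Tendsto.const_mul (2 * sqrtTwoPiI⁻¹)
      ((Tendsto.const_mul (h t) (hLc.sub hcx)).add hEx)
    rw [hval] at hfinal
    exact hfinal
end

section
/- Tail estimate for the oscillatory boundary integral: there is an absolute constant C > 0 such that for every ξ ∈ ℝ, every t > 0, and every h ∈ C¹([0,∞)) with h(τ) → 0 as τ → ∞ and with ∫_t^∞ |h(τ)| τ^{−1/2} dτ < ∞ and ∫_t^∞ τ^{1/2} |h'(τ)| dτ < ∞, the improper integral ∫_t^∞ i ξ e^{−i ξ² τ/2} h(τ) dτ converges and satisfies | ∫_t^∞ i ξ e^{−i ξ² τ/2} h(τ) dτ | ≤ C ( √t |h(t)| + ∫_t^∞ |h(τ)| τ^{−1/2} dτ + ∫_t^∞ τ^{1/2} |h'(τ)| dτ ). -/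
open MeasureTheory Set Filter

lemma normE (ξ τ : ℝ) : ‖Complex.exp (-Complex.I * (ξ:ℂ)^2 * (τ:ℂ) / 2)‖ = 1 := by
  rw [Complex.norm_exp]
  have h : (-Complex.I * (ξ:ℂ)^2 * (τ:ℂ) / 2).re = 0 := by
    have h2 : -Complex.I * (ξ:ℂ)^2 * (τ:ℂ) / 2 = Complex.I * ((-(ξ^2*τ/2) : ℝ) : ℂ) := by
      push_cast; ring
    rw [h2, Complex.mul_re, Complex.I_re, Complex.I_im, Complex.ofReal_re, Complex.ofReal_im]
    ring
  rw [h, Real.exp_zero]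

lemma hasDerivE (ξ τ : ℝ) :
    HasDerivAt (fun τ : ℝ => Complex.exp (-Complex.I * (ξ:ℂ)^2 * (τ:ℂ) / 2))
      ((-Complex.I * (ξ:ℂ)^2 / 2) * Complex.exp (-Complex.I * (ξ:ℂ)^2 * (τ:ℂ) / 2)) τ := by
  have h0 : HasDerivAt (fun τ : ℝ => ((τ:ℂ))) 1 τ := Complex.ofRealCLM.hasDerivAt
  have h1 : HasDerivAt (fun τ : ℝ => -Complex.I * (ξ:ℂ)^2 * (τ:ℂ) / 2)
      (-Complex.I * (ξ:ℂ)^2 / 2) τ := by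
    have h2 := (h0.const_mul (-Complex.I * (ξ:ℂ)^2)).div_const 2
    simpa using h2
  simpa [mul_comm] using h1.cexp

/-- Tail estimate for the oscillatory boundary integral
`∫_t^∞ i ξ e^{-i ξ² τ/2} h(τ) dτ`. -/
theorem oscillatory_tail_estimate :
    ∃ C > (0:ℝ), ∀ ξ t : ℝ, 0 < t → ∀ h : ℝ → ℂ,
      ContDiffOn ℝ 1 h (Set.Ici 0) →
      Filter.Tendsto h Filter.atTop (nhds 0) →
      MeasureTheory.IntegrableOn (fun τ => ‖h τ‖ / Real.sqrt τ) (Set.Ioi t) →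
      MeasureTheory.IntegrableOn (fun τ => Real.sqrt τ * ‖deriv h τ‖) (Set.Ioi t) →
      ∃ L : ℂ,
        Filter.Tendsto
          (fun R : ℝ => ∫ τ in t..R,
            Complex.I * (ξ : ℂ) *
              Complex.exp (-Complex.I * (ξ : ℂ) ^ 2 * (τ : ℂ) / 2) * h τ)
          Filter.atTop (nhds L) ∧
        ‖L‖ ≤ C * (Real.sqrt t * ‖h t‖ +
          (∫ τ in Set.Ioi t, ‖h τ‖ / Real.sqrt τ) +
          (∫ τ in Set.Ioi t, Real.sqrt τ * ‖deriv h τ‖)) := by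
  refine ⟨4, by norm_num, ?_⟩
  intro ξ t ht h hC1 hlim hI1 hI2
  set I₁ : ℝ := ∫ τ in Set.Ioi t, ‖h τ‖ / Real.sqrt τ with hI₁def
  set I₂ : ℝ := ∫ τ in Set.Ioi t, Real.sqrt τ * ‖deriv h τ‖ with hI₂def
  have hI₁0 : 0 ≤ I₁ :=
    integral_nonneg fun τ => div_nonneg (norm_nonneg _) (Real.sqrt_nonneg _)
  have hI₂0 : 0 ≤ I₂ :=
    integral_nonneg fun τ => mul_nonneg (Real.sqrt_nonneg _) (norm_nonneg _)
  have hht0 : 0 ≤ Real.sqrt t * ‖h t‖ := mul_nonneg (Real.sqrt_nonneg _) (norm_nonneg _)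
  by_cases hξ : ξ = 0
  · refine ⟨0, ?_, by simp only [norm_zero]; positivity⟩
    subst hξ
    have : (fun R : ℝ => ∫ τ in t..R,
        Complex.I * ((0:ℝ) : ℂ) *
          Complex.exp (-Complex.I * ((0:ℝ) : ℂ) ^ 2 * (τ : ℂ) / 2) * h τ) = fun _ => 0 := by
      funext R; simp
    rw [this]
    exact tendsto_const_nhds
  -- main case
  set E : ℝ → ℂ := fun τ => Complex.exp (-Complex.I * (ξ:ℂ)^2 * (τ:ℂ) / 2) with hEdef
  set f : ℝ → ℂ := fun τ => Complex.I * (ξ:ℂ) * E τ * h τ with hfdef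
  set v : ℝ → ℂ := fun τ => ((-2/ξ : ℝ) : ℂ) * E τ with hvdef
  set s : ℝ := max t (ξ^2)⁻¹ with hsdef
  have hts : t ≤ s := le_max_left _ _
  have hs0 : 0 < s := lt_of_lt_of_le ht hts
  have hξ2 : (0:ℝ) < ξ^2 := by positivity
  have hξs : (ξ^2)⁻¹ ≤ s := le_max_right _ _
  have hsqrt_inv : Real.sqrt (ξ^2)⁻¹ = |ξ|⁻¹ := by
    rw [Real.sqrt_inv, Real.sqrt_sq_eq_abs]
  have hinvξ : |ξ|⁻¹ ≤ Real.sqrt s := by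
    rw [← hsqrt_inv]; exact Real.sqrt_le_sqrt hξs
  have hξabs : (0:ℝ) < |ξ| := abs_pos.mpr hξ
  -- continuity and differentiability facts
  have hhc : ContinuousOn h (Set.Ici 0) := hC1.continuousOn
  have hd : ∀ τ : ℝ, 0 < τ → HasDerivAt h (deriv h τ) τ := by
    intro τ hτ
    exact (hC1.differentiableOn one_ne_zero).hasDerivAt (Ici_mem_nhds hτ)
  have hd'c : ContinuousOn (deriv h) (Set.Ioi 0) :=
    (hC1.mono (Set.Ioi_subset_Ici le_rfl)).continuousOn_deriv_of_isOpen isOpen_Ioi le_rfl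
  have hEcont : Continuous E := by
    apply Complex.continuous_exp.comp
    fun_prop
  have hnormv : ∀ τ, ‖v τ‖ = 2 / |ξ| := by
    intro τ
    rw [hvdef]
    simp only [norm_mul, Complex.norm_real]
    rw [normE, mul_one, Real.norm_eq_abs, abs_div]
    norm_num
  -- interval integrability of f on subintervals of (0, ∞)
  have hfint : ∀ a b : ℝ, 0 < a → 0 < b → IntervalIntegrable f volume a b := by
    intro a b ha hb
    apply ContinuousOn.intervalIntegrable
    have hsub : Set.uIcc a b ⊆ Set.Ici 0 := by
      intro x hx
      have := hx.1
      have : min a b ≤ x := hx.1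
      have hmin : (0:ℝ) < min a b := lt_min ha hb
      exact le_of_lt (lt_of_lt_of_le hmin hx.1)
    exact ((continuous_const.mul hEcont).continuousOn).mul (hhc.mono hsub)
  -- derivative of v
  have hvderiv : ∀ τ : ℝ, HasDerivAt v (Complex.I * (ξ:ℂ) * E τ) τ := by
    intro τ
    have h1 := (hasDerivE ξ τ).const_mul (((-2/ξ : ℝ)) : ℂ)
    have h2 : ((-2/ξ : ℝ) : ℂ) * ((-Complex.I * (ξ:ℂ)^2 / 2) * E τ)
        = Complex.I * (ξ:ℂ) * E τ := by
      have hξc : (ξ:ℂ) ≠ 0 := by exact_mod_cast hξ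
      push_cast
      field_simp
    rw [h2] at h1
    exact h1
  -- integration by parts identity
  have hibp : ∀ R : ℝ, s ≤ R →
      (∫ τ in t..R, f τ) = (∫ τ in t..s, f τ)
        + (h R * v R - h s * v s - ∫ τ in s..R, deriv h τ * v τ) := by
    intro R hR
    have hR0 : 0 < R := lt_of_lt_of_le hs0 hR
    rw [← intervalIntegral.integral_add_adjacent_intervals (hfint t s ht hs0) (hfint s R hs0 hR0)]
    congr 1
    have huIcc : Set.uIcc s R = Set.Icc s R := Set.uIcc_of_le hR
    have hmem : ∀ x ∈ Set.uIcc s R, 0 < x := by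
      intro x hx
      rw [huIcc] at hx
      exact lt_of_lt_of_le hs0 hx.1
    have h1 : (∫ τ in s..R, f τ) = ∫ τ in s..R, h τ * (Complex.I * (ξ:ℂ) * E τ) := by
      apply intervalIntegral.integral_congr
      intro x _
      rw [hfdef]; ring
    rw [h1]
    rw [intervalIntegral.integral_mul_deriv_eq_deriv_mul
      (fun x hx => hd x (hmem x hx)) (fun x hx => hvderiv x)
      ?_ ?_]
    · apply ContinuousOn.intervalIntegrable
      exact hd'c.mono (fun x hx => hmem x hx)
    · apply ContinuousOn.intervalIntegrable
      exact ((continuous_const.mul hEcont).continuousOn)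
  -- integrability of deriv h * v on Ioi s
  have hptw : ∀ τ ∈ Set.Ioi s, ‖deriv h τ * v τ‖ ≤ 2 * (Real.sqrt τ * ‖deriv h τ‖) := by
    intro τ hτ
    have hτ0 : 0 < τ := lt_trans hs0 hτ
    have hsqτ : Real.sqrt s ≤ Real.sqrt τ := Real.sqrt_le_sqrt (le_of_lt hτ)
    have h1 : |ξ|⁻¹ ≤ Real.sqrt τ := le_trans hinvξ hsqτ
    rw [norm_mul, hnormv]
    have h2 : 2 / |ξ| ≤ 2 * Real.sqrt τ := by
      rw [div_eq_mul_inv]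
      nlinarith
    nlinarith [norm_nonneg (deriv h τ)]
  have hIntG : IntegrableOn (fun τ => 2 * (Real.sqrt τ * ‖deriv h τ‖)) (Set.Ioi s) :=
    (hI2.mono_set (Set.Ioi_subset_Ioi hts)).const_mul 2
  have hIntHv : IntegrableOn (fun τ => deriv h τ * v τ) (Set.Ioi s) := by
    apply hIntG.mono'
    · apply ContinuousOn.aestronglyMeasurable _ measurableSet_Ioi
      exact (hd'c.mono (Set.Ioi_subset_Ioi (le_of_lt hs0))).mul
        ((continuous_const.mul hEcont).continuousOn)
    · exact (ae_restrict_iff' measurableSet_Ioi).2 (ae_of_all _ hptw)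
  -- the limit
  set L : ℂ := (∫ τ in t..s, f τ) + (0 - h s * v s - ∫ τ in Set.Ioi s, deriv h τ * v τ)
    with hLdef
  have htend : Filter.Tendsto (fun R : ℝ => ∫ τ in t..R, f τ) Filter.atTop (nhds L) := by
    have t1 : Filter.Tendsto (fun R : ℝ => h R * v R) Filter.atTop (nhds 0) := by
      have tg : Filter.Tendsto (fun R : ℝ => 2 / |ξ| * ‖h R‖) Filter.atTop (nhds 0) := by
        have := hlim.norm
        rw [norm_zero] at this
        simpa using this.const_mul (2 / |ξ|)
      exact squeeze_zero_norm (fun R => le_of_eq (by rw [norm_mul, hnormv R]; ring)) tg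
    have t2 : Filter.Tendsto (fun R : ℝ => ∫ τ in s..R, deriv h τ * v τ) Filter.atTop
        (nhds (∫ τ in Set.Ioi s, deriv h τ * v τ)) :=
      intervalIntegral_tendsto_integral_Ioi s hIntHv tendsto_id
    have t3 : Filter.Tendsto
        (fun R : ℝ => (∫ τ in t..s, f τ) + (h R * v R - h s * v s - ∫ τ in s..R, deriv h τ * v τ))
        Filter.atTop (nhds L) := by
      rw [hLdef]
      exact tendsto_const_nhds.add ((t1.sub tendsto_const_nhds).sub t2)
    apply t3.congr'
    filter_upwards [Filter.eventually_ge_atTop s] with R hR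
    exact (hibp R hR).symm
  refine ⟨L, htend, ?_⟩
  -- bounds
  have hmono_le : ∀ φ : ℝ → ℝ, IntegrableOn φ (Set.Ioi t) → (∀ τ, 0 ≤ φ τ) →
      (∫ τ in t..s, φ τ) ≤ ∫ τ in Set.Ioi t, φ τ := by
    intro φ hφ hφ0
    rw [intervalIntegral.integral_of_le hts]
    exact setIntegral_mono_set hφ (ae_of_all _ hφ0)
      (HasSubset.Subset.eventuallyLE Set.Ioc_subset_Ioi_self)
  have hnormf : ∀ τ, ‖f τ‖ = |ξ| * ‖h τ‖ := by
    intro τ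
    rw [hfdef]
    simp only [norm_mul, Complex.norm_I, Complex.norm_real, Real.norm_eq_abs, one_mul]
    rw [normE, mul_one]
  have hIquery : IntegrableOn (fun τ => ‖h τ‖ / Real.sqrt τ) (Set.Ioi t) := hI1
  have hquot_cont : ContinuousOn (fun τ => ‖h τ‖ / Real.sqrt τ) (Set.uIcc t s) := by
    have hsub : Set.uIcc t s ⊆ Set.Ici 0 := by
      rw [Set.uIcc_of_le hts]
      intro x hx; exact le_trans (le_of_lt ht) hx.1
    have hsub' : ∀ x ∈ Set.uIcc t s, Real.sqrt x ≠ 0 := by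
      intro x hx
      rw [Set.uIcc_of_le hts] at hx
      have : 0 < x := lt_of_lt_of_le ht hx.1
      positivity
    exact ((hhc.mono hsub).norm).div (Real.continuous_sqrt.continuousOn) hsub'
  have hA : ‖∫ τ in t..s, f τ‖ ≤ I₁ := by
    rcases le_or_gt (ξ^2)⁻¹ t with hc | hc
    · have hst : s = t := max_eq_left hc
      rw [hst, intervalIntegral.integral_same, norm_zero]
      exact hI₁0
    · have hseq : s = (ξ^2)⁻¹ := max_eq_right (le_of_lt hc)
      have hsqs : Real.sqrt s = |ξ|⁻¹ := by rw [hseq, hsqrt_inv]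
      calc ‖∫ τ in t..s, f τ‖ ≤ ∫ τ in t..s, ‖f τ‖ :=
            intervalIntegral.norm_integral_le_integral_norm hts
        _ ≤ ∫ τ in t..s, ‖h τ‖ / Real.sqrt τ := by
            apply intervalIntegral.integral_mono_on hts
            · exact (hfint t s ht hs0).norm
            · exact hquot_cont.intervalIntegrable
            · intro x hx
              have hx0 : 0 < x := lt_of_lt_of_le ht hx.1
              have hsx : 0 < Real.sqrt x := Real.sqrt_pos.mpr hx0
              rw [hnormf]
              have h1 : Real.sqrt x ≤ Real.sqrt s := Real.sqrt_le_sqrt hx.2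
              have h2 : |ξ| ≤ (Real.sqrt x)⁻¹ := by
                have h1' : Real.sqrt x ≤ |ξ|⁻¹ := by rw [← hsqs]; exact h1
                rw [← inv_inv |ξ|]
                exact inv_anti₀ hsx h1'
              calc |ξ| * ‖h x‖ ≤ (Real.sqrt x)⁻¹ * ‖h x‖ :=
                    mul_le_mul_of_nonneg_right h2 (norm_nonneg _)
                _ = ‖h x‖ / Real.sqrt x := by rw [div_eq_mul_inv]; ring
        _ ≤ I₁ := hmono_le _ hI1 (fun τ => div_nonneg (norm_nonneg _) (Real.sqrt_nonneg _))
  have hB : ‖h s * v s‖ ≤ 2 * (Real.sqrt t * ‖h t‖) + I₁ + 2 * I₂ := by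
    set g : ℝ → ℂ := fun τ => ((Real.sqrt τ : ℝ) : ℂ) * h τ with hgdef
    set g' : ℝ → ℂ := fun τ =>
      ((1/(2*Real.sqrt τ) : ℝ) : ℂ) * h τ + ((Real.sqrt τ : ℝ) : ℂ) * deriv h τ with hg'def
    have hmem : ∀ x ∈ Set.uIcc t s, 0 < x := by
      intro x hx
      rw [Set.uIcc_of_le hts] at hx
      exact lt_of_lt_of_le ht hx.1
    have hgd : ∀ x ∈ Set.uIcc t s, HasDerivAt g (g' x) x := by
      intro x hx
      have hx0 : 0 < x := hmem x hx
      have h1 : HasDerivAt (fun τ : ℝ => ((Real.sqrt τ : ℝ) : ℂ))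
          ((1/(2*Real.sqrt x) : ℝ) : ℂ) x :=
        (Real.hasDerivAt_sqrt (ne_of_gt hx0)).ofReal_comp
      exact h1.mul (hd x hx0)
    have hg'int : IntervalIntegrable g' volume t s := by
      apply ContinuousOn.intervalIntegrable
      have hsub : Set.uIcc t s ⊆ Set.Ioi 0 := fun x hx => hmem x hx
      have c1 : ContinuousOn (fun τ : ℝ => (1/(2*Real.sqrt τ) : ℝ)) (Set.uIcc t s) := by
        apply ContinuousOn.div continuousOn_const
          ((continuous_const.mul Real.continuous_sqrt).continuousOn)
        intro x hx
        have := hmem x hx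
        exact (mul_pos two_pos (Real.sqrt_pos.mpr this)).ne'
      have c1' : ContinuousOn (fun τ : ℝ => ((1/(2*Real.sqrt τ) : ℝ) : ℂ)) (Set.uIcc t s) :=
        Complex.continuous_ofReal.comp_continuousOn c1
      have c2 : ContinuousOn (fun τ : ℝ => ((Real.sqrt τ : ℝ) : ℂ)) (Set.uIcc t s) :=
        Complex.continuous_ofReal.comp_continuousOn (Real.continuous_sqrt.continuousOn)
      have hsubIci : Set.uIcc t s ⊆ Set.Ici 0 := fun x hx => le_of_lt (hmem x hx)
      exact (c1'.mul (hhc.mono hsubIci)).add (c2.mul (hd'c.mono hsub))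
    have hftc : ∫ τ in t..s, g' τ = g s - g t :=
      intervalIntegral.integral_eq_sub_of_hasDerivAt hgd hg'int
    have hnormg : ∀ τ, 0 ≤ τ → ‖g τ‖ = Real.sqrt τ * ‖h τ‖ := by
      intro τ hτ
      rw [hgdef]
      simp only [norm_mul, Complex.norm_real, Real.norm_eq_abs]
      rw [abs_of_nonneg (Real.sqrt_nonneg _)]
    have hbound : ‖g s‖ ≤ Real.sqrt t * ‖h t‖ + (1/2) * I₁ + I₂ := by
      have h1 : g s = g t + ∫ τ in t..s, g' τ := by rw [hftc]; ring
      have h2 : ‖g s‖ ≤ ‖g t‖ + ‖∫ τ in t..s, g' τ‖ := by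
        rw [h1]; exact norm_add_le _ _
      have hgt : ‖g t‖ = Real.sqrt t * ‖h t‖ := hnormg t (le_of_lt ht)
      have h3 : ‖∫ τ in t..s, g' τ‖ ≤
          ∫ τ in t..s, ((1/2) * (‖h τ‖ / Real.sqrt τ) + Real.sqrt τ * ‖deriv h τ‖) := by
        calc ‖∫ τ in t..s, g' τ‖ ≤ ∫ τ in t..s, ‖g' τ‖ :=
              intervalIntegral.norm_integral_le_integral_norm hts
          _ ≤ _ := by
              apply intervalIntegral.integral_mono_on hts hg'int.norm
              · apply ContinuousOn.intervalIntegrable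
                apply ContinuousOn.add
                · exact hquot_cont.const_smul (1/2 : ℝ) |>.congr (fun x _ => by
                    simp [smul_eq_mul])
                · have hsub : Set.uIcc t s ⊆ Set.Ioi 0 := fun x hx => hmem x hx
                  exact (Real.continuous_sqrt.continuousOn).mul ((hd'c.mono hsub).norm)
              · intro x hx
                have hx0 : 0 < x := lt_of_lt_of_le ht hx.1
                have hsx : 0 < Real.sqrt x := Real.sqrt_pos.mpr hx0
                rw [hg'def]
                calc ‖((1/(2*Real.sqrt x) : ℝ) : ℂ) * h x + ((Real.sqrt x : ℝ) : ℂ) * deriv h x‖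
                    ≤ ‖((1/(2*Real.sqrt x) : ℝ) : ℂ) * h x‖ + ‖((Real.sqrt x : ℝ) : ℂ) * deriv h x‖ :=
                      norm_add_le _ _
                  _ = (1/(2*Real.sqrt x)) * ‖h x‖ + Real.sqrt x * ‖deriv h x‖ := by
                      simp only [norm_mul, Complex.norm_real, Real.norm_eq_abs]
                      rw [abs_of_nonneg (by positivity : (0:ℝ) ≤ 1/(2*Real.sqrt x)),
                        abs_of_nonneg (Real.sqrt_nonneg _)]
                  _ = (1/2) * (‖h x‖ / Real.sqrt x) + Real.sqrt x * ‖deriv h x‖ := by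
                      field_simp
      have h4 : (∫ τ in t..s, ((1/2) * (‖h τ‖ / Real.sqrt τ) + Real.sqrt τ * ‖deriv h τ‖))
          ≤ (1/2) * I₁ + I₂ := by
        have int1 : IntervalIntegrable (fun τ => (1/2 : ℝ) * (‖h τ‖ / Real.sqrt τ)) volume t s := by
          apply ContinuousOn.intervalIntegrable
          exact hquot_cont.const_smul (1/2 : ℝ) |>.congr (fun x _ => by simp [smul_eq_mul])
        have int2 : IntervalIntegrable (fun τ => Real.sqrt τ * ‖deriv h τ‖) volume t s := by
          apply ContinuousOn.intervalIntegrable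
          have hsub : Set.uIcc t s ⊆ Set.Ioi 0 := fun x hx => hmem x hx
          exact (Real.continuous_sqrt.continuousOn).mul ((hd'c.mono hsub).norm)
        rw [intervalIntegral.integral_add int1 int2, intervalIntegral.integral_const_mul]
        have e1 : (∫ τ in t..s, ‖h τ‖ / Real.sqrt τ) ≤ I₁ :=
          hmono_le _ hI1 (fun τ => div_nonneg (norm_nonneg _) (Real.sqrt_nonneg _))
        have e2 : (∫ τ in t..s, Real.sqrt τ * ‖deriv h τ‖) ≤ I₂ :=
          hmono_le _ hI2 (fun τ => mul_nonneg (Real.sqrt_nonneg _) (norm_nonneg _))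
        linarith
      rw [hgt] at h2
      linarith
    have hvs : ‖h s * v s‖ ≤ 2 * ‖g s‖ := by
      rw [norm_mul, hnormv, hnormg s (le_of_lt hs0)]
      have : 2 / |ξ| ≤ 2 * Real.sqrt s := by
        rw [div_eq_mul_inv]
        nlinarith
      nlinarith [norm_nonneg (h s)]
    calc ‖h s * v s‖ ≤ 2 * ‖g s‖ := hvs
      _ ≤ 2 * (Real.sqrt t * ‖h t‖ + (1/2) * I₁ + I₂) := by linarith
      _ = 2 * (Real.sqrt t * ‖h t‖) + I₁ + 2 * I₂ := by ring
  have hC : ‖∫ τ in Set.Ioi s, deriv h τ * v τ‖ ≤ 2 * I₂ := by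
    calc ‖∫ τ in Set.Ioi s, deriv h τ * v τ‖ ≤ ∫ τ in Set.Ioi s, ‖deriv h τ * v τ‖ :=
          norm_integral_le_integral_norm _
      _ ≤ ∫ τ in Set.Ioi s, 2 * (Real.sqrt τ * ‖deriv h τ‖) :=
          setIntegral_mono_on hIntHv.norm hIntG measurableSet_Ioi hptw
      _ = 2 * ∫ τ in Set.Ioi s, Real.sqrt τ * ‖deriv h τ‖ := by
          rw [integral_const_mul]
      _ ≤ 2 * I₂ := by
          have : (∫ τ in Set.Ioi s, Real.sqrt τ * ‖deriv h τ‖) ≤ I₂ :=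
            setIntegral_mono_set hI2
              (ae_of_all _ (fun τ => mul_nonneg (Real.sqrt_nonneg _) (norm_nonneg _)))
              (HasSubset.Subset.eventuallyLE (Set.Ioi_subset_Ioi hts))
          linarith
  have : ‖L‖ ≤ ‖∫ τ in t..s, f τ‖ + ‖h s * v s‖ + ‖∫ τ in Set.Ioi s, deriv h τ * v τ‖ := by
    rw [hLdef]
    calc ‖(∫ τ in t..s, f τ) + (0 - h s * v s - ∫ τ in Set.Ioi s, deriv h τ * v τ)‖
        ≤ ‖∫ τ in t..s, f τ‖ + ‖0 - h s * v s - ∫ τ in Set.Ioi s, deriv h τ * v τ‖ :=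
          norm_add_le _ _
      _ ≤ _ := by
          rw [zero_sub]
          have := norm_sub_le (-(h s * v s)) (∫ τ in Set.Ioi s, deriv h τ * v τ)
          rw [norm_neg] at this
          linarith
  linarith
end

section
/- Full-line estimate for the oscillatory boundary integral: there is an absolute constant C > 0 such that for every ξ ∈ ℝ and every h ∈ C¹([0,∞)) with h(τ) → 0 as τ → ∞, ∫₀^∞ |h(τ)| τ^{−1/2} dτ < ∞ and ∫₀^∞ τ^{1/2} |h'(τ)| dτ < ∞, the improper integral ∫₀^∞ i ξ e^{−i ξ² τ/2} h(τ) dτ converges and satisfies | ∫₀^∞ i ξ e^{−i ξ² τ/2} h(τ) dτ | ≤ C ( ∫₀^∞ τ^{1/2} |h'(τ)| dτ + ∫₀^∞ |h(τ)| τ^{−1/2} dτ ). -/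
open MeasureTheory Set Filter

lemma osc_norm_exp (ξ τ : ℝ) :
    ‖Complex.exp (-Complex.I * (ξ : ℂ) ^ 2 * (τ : ℂ) / 2)‖ = 1 := by
  have : (-Complex.I * (ξ : ℂ) ^ 2 * (τ : ℂ) / 2)
      = ((-(ξ ^ 2 * τ / 2) : ℝ) : ℂ) * Complex.I := by push_cast; ring
  rw [this, Complex.norm_exp_ofReal_mul_I]

lemma osc_hasDerivAt_exp (ξ τ : ℝ) :
    HasDerivAt (fun t : ℝ => Complex.exp (-Complex.I * (ξ : ℂ) ^ 2 * (t : ℂ) / 2))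
      ((-Complex.I * (ξ : ℂ) ^ 2 / 2) *
        Complex.exp (-Complex.I * (ξ : ℂ) ^ 2 * (τ : ℂ) / 2)) τ := by
  have h1 : HasDerivAt (fun t : ℝ => ((t : ℂ))) 1 τ := by
    simpa using (hasDerivAt_id τ).ofReal_comp
  have hfun : (fun t : ℝ => (-Complex.I * (ξ : ℂ) ^ 2 * (t : ℂ) / 2))
      = fun t : ℝ => (-Complex.I * (ξ : ℂ) ^ 2 / 2) * (t : ℂ) := by
    funext t; ring
  have h2 : HasDerivAt (fun t : ℝ => (-Complex.I * (ξ : ℂ) ^ 2 * (t : ℂ) / 2))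
      (-Complex.I * (ξ : ℂ) ^ 2 / 2) τ := by
    rw [hfun]
    simpa only [mul_one] using h1.const_mul (-Complex.I * (ξ : ℂ) ^ 2 / 2)
  simpa [mul_comm] using h2.cexp

/-- Full-line estimate for the oscillatory boundary integral
`∫₀^∞ i ξ e^{-i ξ² τ/2} h(τ) dτ`. -/
theorem oscillatory_full_estimate :
    ∃ C > (0:ℝ), ∀ ξ : ℝ, ∀ h : ℝ → ℂ,
      ContDiffOn ℝ 1 h (Set.Ici 0) →
      Filter.Tendsto h Filter.atTop (nhds 0) →
      MeasureTheory.IntegrableOn (fun τ => ‖h τ‖ / Real.sqrt τ) (Set.Ioi 0) →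
      MeasureTheory.IntegrableOn (fun τ => Real.sqrt τ * ‖deriv h τ‖) (Set.Ioi 0) →
      ∃ L : ℂ,
        Filter.Tendsto
          (fun R : ℝ => ∫ τ in (0:ℝ)..R,
            Complex.I * (ξ : ℂ) *
              Complex.exp (-Complex.I * (ξ : ℂ) ^ 2 * (τ : ℂ) / 2) * h τ)
          Filter.atTop (nhds L) ∧
        ‖L‖ ≤ C * ((∫ τ in Set.Ioi (0:ℝ), Real.sqrt τ * ‖deriv h τ‖) +
          (∫ τ in Set.Ioi (0:ℝ), ‖h τ‖ / Real.sqrt τ)) := by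
  refine ⟨4, by norm_num, ?_⟩
  intro ξ h hC1 hlim hInt2 hInt1
  have hI1nn : (0:ℝ) ≤ ∫ τ in Set.Ioi (0:ℝ), Real.sqrt τ * ‖deriv h τ‖ :=
    integral_nonneg fun τ => by positivity
  have hI2nn : (0:ℝ) ≤ ∫ τ in Set.Ioi (0:ℝ), ‖h τ‖ / Real.sqrt τ :=
    integral_nonneg fun τ => by positivity
  by_cases hξ : ξ = 0
  · refine ⟨0, ?_, by simp only [norm_zero]; linarith⟩
    subst hξ
    simpa using tendsto_const_nhds
  -- main case ξ ≠ 0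
  have hξ0 : (0:ℝ) < |ξ| := abs_pos.mpr hξ
  have hδpos : (0:ℝ) < (ξ^2)⁻¹ := by positivity
  set δ : ℝ := (ξ^2)⁻¹ with hδdef
  have hsq : Real.sqrt δ = |ξ|⁻¹ := by rw [hδdef, Real.sqrt_inv, Real.sqrt_sq_eq_abs]
  have hsqpos : 0 < Real.sqrt δ := Real.sqrt_pos.mpr hδpos
  set e : ℝ → ℂ := fun τ => Complex.exp (-Complex.I * (ξ:ℂ)^2 * (τ:ℂ)/2) with hedef
  set F : ℝ → ℂ := fun τ => Complex.I * (ξ:ℂ) * e τ * h τ with hFdef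
  set a : ℂ := ((-2/ξ : ℝ) : ℂ) with hadef
  set u : ℝ → ℂ := fun τ => a * e τ with hudef
  have hna : ‖a‖ = 2 / |ξ| := by
    rw [hadef, Complex.norm_real, Real.norm_eq_abs, abs_div, abs_neg]
    norm_num
  have hcont : ContinuousOn h (Set.Ici 0) := hC1.continuousOn
  have he_cont : Continuous e := by
    rw [hedef]; fun_prop
  have hF_cont : ContinuousOn F (Set.Ici 0) := by
    rw [hFdef]
    exact (continuous_const.mul he_cont).continuousOn.mul hcont
  have hu_cont : Continuous u := continuous_const.mul he_cont
  -- derivative facts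
  have hderiv : ∀ τ : ℝ, 0 < τ → HasDerivAt h (deriv h τ) τ := fun τ hτ =>
    ((hC1.differentiableOn one_ne_zero).differentiableAt (Ici_mem_nhds hτ)).hasDerivAt
  have hdc : ContinuousOn (deriv h) (Set.Ioi 0) := by
    have h1 : ContinuousOn (derivWithin h (Set.Ici 0)) (Set.Ici 0) :=
      hC1.continuousOn_derivWithin (uniqueDiffOn_Ici 0) le_rfl
    exact (h1.mono Set.Ioi_subset_Ici_self).congr fun τ hτ =>
      (derivWithin_of_mem_nhds (Ici_mem_nhds hτ)).symm
  have hIoisub : Set.Ioi δ ⊆ Set.Ioi (0:ℝ) := Set.Ioi_subset_Ioi hδpos.le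
  -- integrability of deriv h on Ioi δ
  have hIδ : MeasureTheory.IntegrableOn (deriv h) (Set.Ioi δ) := by
    refine Integrable.mono' ((hInt1.mono_set hIoisub).const_mul (Real.sqrt δ)⁻¹)
      ((hdc.mono hIoisub).aestronglyMeasurable measurableSet_Ioi) ?_
    filter_upwards [ae_restrict_mem measurableSet_Ioi] with τ hτ
    have h1 : Real.sqrt δ ≤ Real.sqrt τ := Real.sqrt_le_sqrt (le_of_lt hτ)
    have h2 : 1 ≤ (Real.sqrt δ)⁻¹ * Real.sqrt τ := by
      rw [inv_mul_eq_div, le_div_iff₀ hsqpos]; simpa using h1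
    have := norm_nonneg (deriv h τ)
    nlinarith
  -- deriv h integral bound
  have hd_bound : (∫ τ in Set.Ioi δ, ‖deriv h τ‖)
      ≤ |ξ| * ∫ τ in Set.Ioi (0:ℝ), Real.sqrt τ * ‖deriv h τ‖ := by
    have step1 : (∫ τ in Set.Ioi δ, ‖deriv h τ‖)
        ≤ ∫ τ in Set.Ioi δ, |ξ| * (Real.sqrt τ * ‖deriv h τ‖) := by
      refine setIntegral_mono_on hIδ.norm
        ((hInt1.mono_set hIoisub).const_mul _) measurableSet_Ioi ?_
      intro τ hτ
      have h1 : Real.sqrt δ ≤ Real.sqrt τ := Real.sqrt_le_sqrt (le_of_lt hτ)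
      have h2 : 1 ≤ |ξ| * Real.sqrt τ := by
        calc (1:ℝ) = |ξ| * |ξ|⁻¹ := by field_simp
        _ ≤ |ξ| * Real.sqrt τ := by
            refine mul_le_mul_of_nonneg_left ?_ hξ0.le
            rw [← hsq]; exact h1
      have := norm_nonneg (deriv h τ)
      nlinarith
    have step2 : (∫ τ in Set.Ioi δ, |ξ| * (Real.sqrt τ * ‖deriv h τ‖))
        = |ξ| * ∫ τ in Set.Ioi δ, Real.sqrt τ * ‖deriv h τ‖ := by
      exact integral_const_mul _ _
    have step3 : (∫ τ in Set.Ioi δ, Real.sqrt τ * ‖deriv h τ‖)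
        ≤ ∫ τ in Set.Ioi (0:ℝ), Real.sqrt τ * ‖deriv h τ‖ := by
      refine setIntegral_mono_set hInt1 ?_ hIoisub.eventuallyLE
      exact Filter.Eventually.of_forall fun τ => by positivity
    calc (∫ τ in Set.Ioi δ, ‖deriv h τ‖) ≤ _ := step1
    _ = _ := step2
    _ ≤ |ξ| * ∫ τ in Set.Ioi (0:ℝ), Real.sqrt τ * ‖deriv h τ‖ := by
        exact mul_le_mul_of_nonneg_left step3 hξ0.le
  -- value of h δ via FTC
  have hftc : ∀ R : ℝ, δ ≤ R → (∫ τ in δ..R, deriv h τ) = h R - h δ := by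
    intro R hR
    refine intervalIntegral.integral_eq_sub_of_hasDerivAt ?_ ?_
    · intro τ hτ
      rw [Set.uIcc_of_le hR] at hτ
      exact hderiv τ (lt_of_lt_of_le hδpos hτ.1)
    · refine ContinuousOn.intervalIntegrable ?_
      refine hdc.mono ?_
      rw [Set.uIcc_of_le hR]
      intro τ hτ; exact lt_of_lt_of_le hδpos hτ.1
  have htail : Filter.Tendsto (fun R => ∫ τ in δ..R, deriv h τ) Filter.atTop
      (nhds (∫ τ in Set.Ioi δ, deriv h τ)) :=
    MeasureTheory.intervalIntegral_tendsto_integral_Ioi δ hIδ tendsto_id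
  have hδval : h δ = -∫ τ in Set.Ioi δ, deriv h τ := by
    have t1 : Filter.Tendsto (fun R => h δ + ∫ τ in δ..R, deriv h τ) Filter.atTop
        (nhds (h δ + ∫ τ in Set.Ioi δ, deriv h τ)) := tendsto_const_nhds.add htail
    have t2 : Filter.Tendsto (fun R => h δ + ∫ τ in δ..R, deriv h τ) Filter.atTop
        (nhds 0) := by
      refine Filter.Tendsto.congr' ?_ hlim
      filter_upwards [Filter.eventually_ge_atTop δ] with R hR
      rw [hftc R hR]; ring
    exact eq_neg_of_add_eq_zero_left (tendsto_nhds_unique t1 t2)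
  have hhδ : ‖h δ‖ ≤ ∫ τ in Set.Ioi δ, ‖deriv h τ‖ := by
    rw [hδval, norm_neg]
    exact norm_integral_le_integral_norm _
  have hnu : ∀ τ : ℝ, ‖u τ‖ = 2 / |ξ| := by
    intro τ
    simp only [hudef, hedef, norm_mul, hna, osc_norm_exp ξ τ, mul_one]
  have hca : a * (-Complex.I * (ξ:ℂ)^2 / 2) = Complex.I * (ξ:ℂ) := by
    have hξc : (ξ:ℂ) ≠ 0 := Complex.ofReal_ne_zero.mpr hξ
    rw [hadef]; push_cast
    field_simp
  have hu' : ∀ τ : ℝ, HasDerivAt u (Complex.I * (ξ:ℂ) * e τ) τ := by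
    intro τ
    have h1 := (osc_hasDerivAt_exp ξ τ).const_mul a
    rw [hudef, hedef]
    refine h1.congr_deriv ?_
    rw [← mul_assoc, hca]
  have hIw : MeasureTheory.IntegrableOn (fun τ => deriv h τ * u τ) (Set.Ioi δ) := by
    refine Integrable.mono' (hIδ.norm.const_mul (2/|ξ|)) ?_ ?_
    · exact ((hdc.mono hIoisub).mul hu_cont.continuousOn).aestronglyMeasurable
        measurableSet_Ioi
    · refine Filter.Eventually.of_forall fun τ => ?_
      rw [norm_mul, hnu τ, mul_comm]
  have hw_tail : Filter.Tendsto (fun R => ∫ τ in δ..R, deriv h τ * u τ) Filter.atTop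
      (nhds (∫ τ in Set.Ioi δ, deriv h τ * u τ)) :=
    MeasureTheory.intervalIntegral_tendsto_integral_Ioi δ hIw tendsto_id
  set A : ℂ := ∫ τ in (0:ℝ)..δ, F τ with hAdef
  set L : ℂ := A - h δ * u δ - ∫ τ in Set.Ioi δ, deriv h τ * u τ with hLdef
  have heq : ∀ᶠ R in Filter.atTop, (∫ τ in (0:ℝ)..R, F τ)
      = A + (h R * u R - h δ * u δ - ∫ τ in δ..R, deriv h τ * u τ) := by
    filter_upwards [Filter.eventually_ge_atTop δ] with R hR
    have hadj : A + ∫ τ in δ..R, F τ = ∫ τ in (0:ℝ)..R, F τ := by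
      refine intervalIntegral.integral_add_adjacent_intervals ?_ ?_
      · refine (hF_cont.mono ?_).intervalIntegrable
        rw [Set.uIcc_of_le hδpos.le]; exact fun τ hτ => hτ.1
      · refine (hF_cont.mono ?_).intervalIntegrable
        rw [Set.uIcc_of_le hR]; exact fun τ hτ => le_trans hδpos.le hτ.1
    have hibp : (∫ τ in δ..R, F τ)
        = h R * u R - h δ * u δ - ∫ τ in δ..R, deriv h τ * u τ := by
      have h1 : (∫ τ in δ..R, h τ * (Complex.I * (ξ:ℂ) * e τ))
          = h R * u R - h δ * u δ - ∫ τ in δ..R, deriv h τ * u τ := by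
        refine intervalIntegral.integral_mul_deriv_eq_deriv_mul ?_ ?_ ?_ ?_
        · intro τ hτ; rw [Set.uIcc_of_le hR] at hτ
          exact hderiv τ (lt_of_lt_of_le hδpos hτ.1)
        · intro τ _; exact hu' τ
        · refine ((hdc.mono ?_)).intervalIntegrable
          rw [Set.uIcc_of_le hR]; exact fun τ hτ => lt_of_lt_of_le hδpos hτ.1
        · exact (continuous_const.mul he_cont).continuousOn.intervalIntegrable
      rw [← h1]
      refine intervalIntegral.integral_congr fun τ _ => ?_
      simp only [hFdef]; ring
    rw [← hadj, hibp]
  have hzero : Filter.Tendsto (fun R => h R * u R) Filter.atTop (nhds 0) := by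
    rw [tendsto_zero_iff_norm_tendsto_zero]
    have hn : ∀ R : ℝ, ‖h R * u R‖ = ‖h R‖ * (2/|ξ|) := fun R => by rw [norm_mul, hnu]
    simp only [hn]
    have h2 := (tendsto_zero_iff_norm_tendsto_zero.mp hlim).mul_const (2/|ξ|)
    simpa using h2
  have tend : Filter.Tendsto
      (fun R => A + (h R * u R - h δ * u δ - ∫ τ in δ..R, deriv h τ * u τ))
      Filter.atTop (nhds L) := by
    have hL2 : L = A + (0 - h δ * u δ - ∫ τ in Set.Ioi δ, deriv h τ * u τ) := by
      rw [hLdef]; ring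
    rw [hL2]
    exact tendsto_const_nhds.add ((hzero.sub tendsto_const_nhds).sub hw_tail)
  have heq' : (fun R => A + (h R * u R - h δ * u δ - ∫ τ in δ..R, deriv h τ * u τ))
      =ᶠ[Filter.atTop] fun R => ∫ τ in (0:ℝ)..R, F τ := by
    filter_upwards [heq] with R hR; exact hR.symm
  refine ⟨L, tend.congr' heq', ?_⟩
  -- norm bounds
  have hnF : ∀ τ : ℝ, ‖F τ‖ = |ξ| * ‖h τ‖ := by
    intro τ
    simp only [hFdef, hedef, norm_mul, Complex.norm_I, one_mul, Complex.norm_real,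
      Real.norm_eq_abs, osc_norm_exp ξ τ, mul_one]
  have hAbound : ‖A‖ ≤ ∫ τ in Set.Ioi (0:ℝ), ‖h τ‖ / Real.sqrt τ := by
    have h1 : ‖A‖ ≤ ∫ τ in (0:ℝ)..δ, ‖F τ‖ :=
      intervalIntegral.norm_integral_le_integral_norm hδpos.le
    have h1' : (∫ τ in (0:ℝ)..δ, ‖F τ‖) = ∫ τ in Set.Ioc (0:ℝ) δ, ‖F τ‖ :=
      intervalIntegral.integral_of_le hδpos.le
    have h2 : (∫ τ in Set.Ioc (0:ℝ) δ, ‖F τ‖)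
        ≤ ∫ τ in Set.Ioc (0:ℝ) δ, ‖h τ‖ / Real.sqrt τ := by
      refine setIntegral_mono_on ?_ (hInt2.mono_set Set.Ioc_subset_Ioi_self)
        measurableSet_Ioc ?_
      · exact ((hF_cont.mono Set.Icc_subset_Ici_self).norm.integrableOn_Icc).mono_set
          Set.Ioc_subset_Icc_self
      · intro τ hτ
        rw [hnF τ]
        have hst : 0 < Real.sqrt τ := Real.sqrt_pos.mpr hτ.1
        have hs : Real.sqrt τ ≤ Real.sqrt δ := Real.sqrt_le_sqrt hτ.2
        have hxi : |ξ| ≤ (Real.sqrt τ)⁻¹ := by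
          have h3 := inv_anti₀ hst hs
          rwa [hsq, inv_inv] at h3
        rw [div_eq_mul_inv, mul_comm]
        exact mul_le_mul_of_nonneg_left hxi (norm_nonneg _)
    have h3 : (∫ τ in Set.Ioc (0:ℝ) δ, ‖h τ‖ / Real.sqrt τ)
        ≤ ∫ τ in Set.Ioi (0:ℝ), ‖h τ‖ / Real.sqrt τ :=
      setIntegral_mono_set hInt2 (Filter.Eventually.of_forall fun τ => by positivity)
        Set.Ioc_subset_Ioi_self.eventuallyLE
    linarith [h1, h1'.le, h2, h3, h1'.ge]
  have hBbound : ‖h δ * u δ‖ ≤ 2 * ∫ τ in Set.Ioi (0:ℝ), Real.sqrt τ * ‖deriv h τ‖ := by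
    rw [norm_mul, hnu]
    have h1 : ‖h δ‖ ≤ |ξ| * ∫ τ in Set.Ioi (0:ℝ), Real.sqrt τ * ‖deriv h τ‖ :=
      hhδ.trans hd_bound
    have h2 : ‖h δ‖ * (2/|ξ|)
        ≤ (|ξ| * ∫ τ in Set.Ioi (0:ℝ), Real.sqrt τ * ‖deriv h τ‖) * (2/|ξ|) :=
      mul_le_mul_of_nonneg_right h1 (by positivity)
    refine h2.trans (le_of_eq ?_)
    field_simp
  have hCbound : ‖∫ τ in Set.Ioi δ, deriv h τ * u τ‖
      ≤ 2 * ∫ τ in Set.Ioi (0:ℝ), Real.sqrt τ * ‖deriv h τ‖ := by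
    have h1 : ‖∫ τ in Set.Ioi δ, deriv h τ * u τ‖
        ≤ ∫ τ in Set.Ioi δ, ‖deriv h τ * u τ‖ := norm_integral_le_integral_norm _
    have h2 : (∫ τ in Set.Ioi δ, ‖deriv h τ * u τ‖)
        = (∫ τ in Set.Ioi δ, ‖deriv h τ‖) * (2/|ξ|) := by
      have hpt : ∀ τ : ℝ, ‖deriv h τ * u τ‖ = ‖deriv h τ‖ * (2/|ξ|) := fun τ => by
        rw [norm_mul, hnu]
      rw [← integral_mul_const]
      exact integral_congr_ae (Filter.Eventually.of_forall hpt)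
    have h3 : (∫ τ in Set.Ioi δ, ‖deriv h τ‖) * (2/|ξ|)
        ≤ (|ξ| * ∫ τ in Set.Ioi (0:ℝ), Real.sqrt τ * ‖deriv h τ‖) * (2/|ξ|) :=
      mul_le_mul_of_nonneg_right hd_bound (by positivity)
    have h4 : (|ξ| * ∫ τ in Set.Ioi (0:ℝ), Real.sqrt τ * ‖deriv h τ‖) * (2/|ξ|)
        = 2 * ∫ τ in Set.Ioi (0:ℝ), Real.sqrt τ * ‖deriv h τ‖ := by
      field_simp
    linarith
  have hLle : ‖L‖ ≤ ‖A‖ + ‖h δ * u δ‖ + ‖∫ τ in Set.Ioi δ, deriv h τ * u τ‖ := by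
    rw [hLdef]
    have n1 := norm_sub_le (A - h δ * u δ) (∫ τ in Set.Ioi δ, deriv h τ * u τ)
    have n2 := norm_sub_le A (h δ * u δ)
    linarith
  linarith
end
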